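/- arXiv:1207.7153 — 9 statements merged into one kernel-verified Lean document; each statement's English description precedes it below -/
import Mathlib

section
/- For every i ≥ 0, the monomial x^i lies in the K-span of the elements H_0 y^i, H_1 y^{i-1}, ..., H_{i-1} y, H_i, where for i = an + e with 0 ≤ e < n we set H_i = x^e F^a. -/
open MvPolynomial

private def SpanSet {K : Type*} [Field K] (n : ℕ) (F : MvPolynomial (Fin 2) K) (i : ℕ) :
    Set (MvPolynomial (Fin 2) K) :=
  {p : MvPolynomial (Fin 2) K | ∃ k ≤ i, p = X 0 ^ (k % n) * F ^ (k / n) * X 1 ^ (i - k)}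

private lemma aux_mulY {K : Type*} [Field K] (n : ℕ) (F : MvPolynomial (Fin 2) K)
    {j i : ℕ} (hji : j ≤ i) {p : MvPolynomial (Fin 2) K}
    (hp : p ∈ Submodule.span K (SpanSet n F j)) :
    p * X 1 ^ (i - j) ∈ Submodule.span K (SpanSet n F i) := by
  induction hp using Submodule.span_induction with
  | mem q hq =>
    obtain ⟨k, hk, rfl⟩ := hq
    apply Submodule.subset_span
    refine ⟨k, hk.trans hji, ?_⟩
    rw [show i - k = (j - k) + (i - j) from by omega, pow_add, mul_assoc]
  | zero => simp
  | add a b _ _ ha hb => rw [add_mul]; exact Submodule.add_mem _ ha hb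
  | smul c a _ ha => rw [smul_mul_assoc]; exact Submodule.smul_mem _ _ ha

private lemma aux_mulF {K : Type*} [Field K] {n : ℕ} (hn : 1 ≤ n) (F : MvPolynomial (Fin 2) K)
    {j : ℕ} {p : MvPolynomial (Fin 2) K}
    (hp : p ∈ Submodule.span K (SpanSet n F j)) :
    p * F ∈ Submodule.span K (SpanSet n F (j + n)) := by
  induction hp using Submodule.span_induction with
  | mem q hq =>
    obtain ⟨k, hk, rfl⟩ := hq
    apply Submodule.subset_span
    refine ⟨k + n, by omega, ?_⟩
    rw [Nat.add_mod_right, Nat.add_div_right _ (by omega), show j + n - (k + n) = j - k by omega,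
      pow_succ]
    ring
  | zero => simp
  | add a b _ _ ha hb => rw [add_mul]; exact Submodule.add_mem _ ha hb
  | smul c a _ ha => rw [smul_mul_assoc]; exact Submodule.smul_mem _ _ ha

theorem stmt_1 {K : Type*} [Field K] (n : ℕ) (hn : 1 ≤ n)
    (F : MvPolynomial (Fin 2) K) (hF : F.IsHomogeneous n)
    (hFx : MvPolynomial.coeff (Finsupp.single 0 n) F = 1) :
    ∀ i : ℕ,
      (X 0 : MvPolynomial (Fin 2) K) ^ i ∈
        Submodule.span K
          {p : MvPolynomial (Fin 2) K | ∃ k ≤ i,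
            p = X 0 ^ (k % n) * F ^ (k / n) * X 1 ^ (i - k)} := by
  intro i
  show _ ∈ Submodule.span K (SpanSet n F i)
  induction i using Nat.strong_induction_on with
  | _ i ih =>
  rcases lt_or_ge i n with hin | hin
  · apply Submodule.subset_span
    exact ⟨i, le_rfl, by rw [Nat.mod_eq_of_lt hin, Nat.div_eq_of_lt hin]; simp⟩
  · -- i ≥ n
    have hG : (F - X 0 ^ n : MvPolynomial (Fin 2) K).IsHomogeneous n := by
      have := (isHomogeneous_X K (0 : Fin 2)).pow n
      simpa using hF.sub (by simpa using this)
    have key : (X 0 : MvPolynomial (Fin 2) K) ^ i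
        = X 0 ^ (i - n) * F - X 0 ^ (i - n) * (F - X 0 ^ n) := by
      rw [mul_sub, ← pow_add, show i - n + n = i by omega]
      ring
    rw [key]
    apply Submodule.sub_mem
    · have h1 := aux_mulF hn F (ih (i - n) (by omega))
      rw [show i - n + n = i by omega] at h1
      exact h1
    · -- expand F - X 0 ^ n as a sum of monomials
      set G := F - X 0 ^ n with hGdef
      rw [G.as_sum, Finset.mul_sum]
      apply Submodule.sum_mem
      intro v hv
      have hsum : v 0 + v 1 = n := by
        have hdeg := hG (MvPolynomial.mem_support_iff.mp hv)
        change Finsupp.weight (fun _ => 1) v = n at hdeg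
        rw [← Finsupp.degree_eq_weight_one, Finsupp.degree_apply,
          Finset.sum_subset (Finset.subset_univ v.support)
            (fun x _ hx => Finsupp.notMem_support_iff.mp hx),
          Fin.sum_univ_two] at hdeg
        exact hdeg
      have hv1 : 1 ≤ v 1 := by
        by_contra h
        have hv1 : v 1 = 0 := by omega
        have : v = Finsupp.single 0 n := by
          ext a
          fin_cases a <;> simp [Finsupp.single_apply] <;> omega
        rw [MvPolynomial.mem_support_iff, this, hGdef] at hv
        apply hv
        rw [MvPolynomial.coeff_sub, hFx, MvPolynomial.coeff_X_pow]
        simp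
      have hmon : (monomial v (coeff v G) : MvPolynomial (Fin 2) K)
          = coeff v G • (X 0 ^ (v 0) * X 1 ^ (v 1)) := by
        rw [MvPolynomial.monomial_eq, MvPolynomial.smul_eq_C_mul]
        congr 1
        rw [Finsupp.prod_fintype _ _ (fun i => pow_zero _), Fin.prod_univ_two]
      rw [hmon, mul_smul_comm]
      apply Submodule.smul_mem
      have heq : (X 0 : MvPolynomial (Fin 2) K) ^ (i - n) * (X 0 ^ (v 0) * X 1 ^ (v 1))
          = X 0 ^ (i - v 1) * X 1 ^ (i - (i - v 1)) := by
        rw [← mul_assoc, ← pow_add]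
        congr 2 <;> omega
      rw [heq]
      exact aux_mulY n F (by omega) (ih (i - v 1) (by omega))
end

section
/- The set {H_i y^j z^l : i, j, l ≥ 0} is a K-vector space basis of the polynomial ring K[x,y,z], where H_i = x^e F^a for i = an + e, 0 ≤ e < n. -/
open MvPolynomial

noncomputable def tri (i j l : ℕ) : Fin 3 →₀ ℕ :=
  Finsupp.single 0 i + Finsupp.single 1 j + Finsupp.single 2 l

lemma tri_apply0 (i j l : ℕ) : tri i j l 0 = i := by simp [tri, Finsupp.single_apply]
lemma tri_apply1 (i j l : ℕ) : tri i j l 1 = j := by simp [tri, Finsupp.single_apply]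
lemma tri_apply2 (i j l : ℕ) : tri i j l 2 = l := by simp [tri, Finsupp.single_apply]

lemma eq_tri (m : Fin 3 →₀ ℕ) (i j l : ℕ) (h0 : m 0 = i) (h1 : m 1 = j) (h2 : m 2 = l) :
    m = tri i j l := by
  ext k; fin_cases k
  · simpa using h0.trans (tri_apply0 i j l).symm
  · simpa using h1.trans (tri_apply1 i j l).symm
  · simpa using h2.trans (tri_apply2 i j l).symm

section Aux
variable {K : Type*} [Field K] (n : ℕ) (F : MvPolynomial (Fin 3) K)
  (hF : F.IsHomogeneous n) (hFz : ∀ m ∈ F.support, m 2 = 0)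
  (hFx : MvPolynomial.coeff (Finsupp.single 0 n) F = 1)

lemma deg3 (d : Fin 3 →₀ ℕ) : (Finsupp.weight (1 : Fin 3 → ℕ)) d = d 0 + d 1 + d 2 := by
  simp [Finsupp.weight_apply, Finsupp.sum_fintype, Fin.sum_univ_three]

variable (hF : F.IsHomogeneous n) (hFz : ∀ m ∈ F.support, m 2 = 0)
  (hFx : MvPolynomial.coeff (Finsupp.single 0 n) F = 1)

include hFz in
lemma zsupp (e q : ℕ) : ∀ m : Fin 3 →₀ ℕ, coeff m (X 0 ^ e * F ^ q : MvPolynomial (Fin 3) K) ≠ 0 → m 2 = 0 := by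
  induction q with
  | zero =>
    intro m hm
    rw [pow_zero, mul_one, X_pow_eq_monomial, coeff_monomial] at hm
    split at hm
    · next h => subst h; simp [Finsupp.single_apply]
    · exact absurd rfl hm
  | succ q ih =>
    intro m hm
    rw [pow_succ, ← mul_assoc] at hm
    have := support_mul (X 0 ^ e * F ^ q) F (mem_support_iff.mpr hm)
    rw [Finset.mem_add] at this
    obtain ⟨a, ha, b, hb, rfl⟩ := this
    have h1 := ih a (mem_support_iff.mp ha)
    have h2 := hFz b hb
    simp [h1, h2]

include hF in
lemma homog (e q : ℕ) : (X 0 ^ e * F ^ q : MvPolynomial (Fin 3) K).IsHomogeneous (e + n * q) := by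
  have h1 : (X 0 ^ e : MvPolynomial (Fin 3) K).IsHomogeneous e := by
    simpa using (isHomogeneous_X K (0 : Fin 3)).pow e
  exact h1.mul (hF.pow q)

include hF hFz hFx in
lemma coeff_lead (e q : ℕ) :
    coeff (Finsupp.single 0 (e + n * q)) (X 0 ^ e * F ^ q : MvPolynomial (Fin 3) K) = 1 := by
  have key : ∀ q : ℕ, coeff (Finsupp.single 0 (n * q)) (F ^ q : MvPolynomial (Fin 3) K) = 1 := by
    intro q
    induction q with
    | zero => simp
    | succ q ih =>
      rw [pow_succ, coeff_mul]
      rw [Finset.sum_eq_single (Finsupp.single (0 : Fin 3) (n * q), Finsupp.single (0 : Fin 3) n)]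
      · rw [ih, hFx, one_mul]
      · rintro ⟨a, b⟩ hab hne
        rw [Finset.HasAntidiagonal.mem_antidiagonal] at hab
        by_cases hb : coeff b F = 0
        · rw [hb, mul_zero]
        have hb2 : b 2 = 0 := hFz b (mem_support_iff.mpr hb)
        have hb1 : b 1 = 0 := by
          have := congrArg (fun f : Fin 3 →₀ ℕ => f 1) hab
          simp [Finsupp.single_apply] at this
          omega
        have hdeg : b 0 + b 1 + b 2 = n := by rw [← deg3]; exact hF hb
        have hb0 : b 0 = n := by omega
        have hbeq : b = Finsupp.single (0 : Fin 3) n := by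
          ext k; fin_cases k <;> simp [Finsupp.single_apply, hb0, hb1, hb2]
        exfalso
        apply hne
        have ha : a = Finsupp.single (0 : Fin 3) (n * q) := by
          have := hab
          rw [hbeq] at this
          have h0 : a 0 = n * q := by
            have := congrArg (fun f : Fin 3 →₀ ℕ => f 0) hab
            rw [Nat.mul_succ] at this
            simp [Finsupp.single_apply, hb0] at this ⊢
            omega
          have h1 : a 1 = 0 := by
            have := congrArg (fun f : Fin 3 →₀ ℕ => f 1) hab
            simp [Finsupp.single_apply, hb1] at this
            omega
          have h2 : a 2 = 0 := by
            have := congrArg (fun f : Fin 3 →₀ ℕ => f 2) hab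
            simp [Finsupp.single_apply, hb2] at this
            omega
          ext k; fin_cases k <;> simp [Finsupp.single_apply, h0, h1, h2]
        rw [ha, hbeq]
      · intro h
        exfalso
        apply h
        rw [Finset.HasAntidiagonal.mem_antidiagonal, ← Finsupp.single_add, Nat.mul_succ]
  rw [X_pow_eq_monomial, mul_comm ((monomial (Finsupp.single (0:Fin 3) e)) (1:K)) (F ^ q),
    coeff_mul_monomial']
  have hle : Finsupp.single (0 : Fin 3) e ≤ Finsupp.single 0 (e + n * q) := by
    rw [Finsupp.le_def]; intro k
    rcases eq_or_ne k 0 with rfl | hk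
    · simp [Finsupp.single_apply] <;> omega
    · simp [Finsupp.single_apply, (Ne.symm hk)]
  rw [if_pos hle]
  have : Finsupp.single (0 : Fin 3) (e + n * q) - Finsupp.single 0 e = Finsupp.single 0 (n * q) := by
    ext k
    rcases eq_or_ne k 0 with rfl | hk
    · simp [Finsupp.tsub_apply, Finsupp.single_apply] <;> omega
    · simp [Finsupp.single_apply, (Ne.symm hk)]
  rw [this, key, mul_one]

end Aux

section Key
variable {K : Type*} [Field K] (n : ℕ) (F : MvPolynomial (Fin 3) K)
  (hF : F.IsHomogeneous n) (hFz : ∀ m ∈ F.support, m 2 = 0)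
  (hFx : MvPolynomial.coeff (Finsupp.single 0 n) F = 1)


include hF hFz hFx in
lemma key_one (i j l : ℕ) :
    coeff (tri i j l) (X 0 ^ (i % n) * F ^ (i / n) * X 1 ^ j * X 2 ^ l) = 1 := by
  have hsum : i % n + n * (i / n) = i := Nat.mod_add_div i n
  have hmono : (X 1 ^ j * X 2 ^ l : MvPolynomial (Fin 3) K)
      = monomial (Finsupp.single 1 j + Finsupp.single 2 l) 1 := by
    rw [X_pow_eq_monomial, X_pow_eq_monomial, monomial_mul, one_mul]
  rw [mul_assoc, hmono, coeff_mul_monomial']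
  have hle : Finsupp.single (1 : Fin 3) j + Finsupp.single 2 l ≤ tri i j l := by
    rw [Finsupp.le_def]; intro k; fin_cases k <;>
      simp [tri, Finsupp.single_apply]
  rw [if_pos hle]
  have hsub : tri i j l - (Finsupp.single (1 : Fin 3) j + Finsupp.single 2 l)
      = Finsupp.single 0 i := by
    ext k; fin_cases k <;> simp [tri, Finsupp.single_apply]
  rw [hsub, mul_one]
  have := coeff_lead n F hF hFz hFx (i % n) (i / n)
  rwa [hsum] at this

include hF hFz in
lemma key_supp (i j l : ℕ) (m : Fin 3 →₀ ℕ)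
    (hm : coeff m (X 0 ^ (i % n) * F ^ (i / n) * X 1 ^ j * X 2 ^ l) ≠ 0) :
    m 2 = l ∧ m 0 + m 1 = i + j ∧ j ≤ m 1 ∧ (m 1 = j → m = tri i j l) := by
  have hsum : i % n + n * (i / n) = i := Nat.mod_add_div i n
  have hmono : (X 1 ^ j * X 2 ^ l : MvPolynomial (Fin 3) K)
      = monomial (Finsupp.single 1 j + Finsupp.single 2 l) 1 := by
    rw [X_pow_eq_monomial, X_pow_eq_monomial, monomial_mul, one_mul]
  rw [mul_assoc, hmono, coeff_mul_monomial'] at hm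
  set s : Fin 3 →₀ ℕ := Finsupp.single 1 j + Finsupp.single 2 l with hs
  by_cases hle : s ≤ m
  swap
  · rw [if_neg hle] at hm; exact absurd rfl hm
  rw [if_pos hle, mul_one] at hm
  have hle' := Finsupp.le_def.mp hle
  have hs0 : s 0 = 0 := by simp [hs, Finsupp.single_apply]
  have hs1 : s 1 = j := by simp [hs, Finsupp.single_apply]
  have hs2 : s 2 = l := by simp [hs, Finsupp.single_apply]
  have h1le : j ≤ m 1 := by have := hle' 1; rwa [hs1] at this
  have h2le : l ≤ m 2 := by have := hle' 2; rwa [hs2] at this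
  have hz := zsupp F hFz (i % n) (i / n) (m - s) hm
  have hdeg : (m - s) 0 + (m - s) 1 + (m - s) 2 = i := by
    rw [← deg3]
    have := (homog n F hF (i % n) (i / n)) hm
    rwa [hsum] at this
  have e0 : (m - s) 0 = m 0 := by rw [Finsupp.tsub_apply, hs0]; omega
  have e1 : (m - s) 1 = m 1 - j := by rw [Finsupp.tsub_apply, hs1]
  have e2 : (m - s) 2 = m 2 - l := by rw [Finsupp.tsub_apply, hs2]
  rw [e0, e1, e2] at hdeg
  rw [e2] at hz
  have hm2 : m 2 = l := by omega
  have hsum' : m 0 + m 1 = i + j := by omega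
  refine ⟨hm2, hsum', h1le, fun h1 => eq_tri m i j l (by omega) h1 hm2⟩

end Key

theorem stmt_2 {K : Type*} [Field K] (n : ℕ) (hn : 1 ≤ n)
    (F : MvPolynomial (Fin 3) K) (hF : F.IsHomogeneous n)
    (hFz : ∀ m ∈ F.support, m 2 = 0)
    (hFx : MvPolynomial.coeff (Finsupp.single 0 n) F = 1)
    (B : ℕ × ℕ × ℕ → MvPolynomial (Fin 3) K)
    (hB : ∀ i j l : ℕ,
      B (i, j, l) = X 0 ^ (i % n) * F ^ (i / n) * X 1 ^ j * X 2 ^ l) :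
    LinearIndependent K B ∧ Submodule.span K (Set.range B) = ⊤ := by
  have hB' : ∀ p : ℕ × ℕ × ℕ,
      B p = X 0 ^ (p.1 % n) * F ^ (p.1 / n) * X 1 ^ p.2.1 * X 2 ^ p.2.2 := by
    rintro ⟨i, j, l⟩; exact hB i j l
  have hone : ∀ p : ℕ × ℕ × ℕ, coeff (tri p.1 p.2.1 p.2.2) (B p) = 1 := by
    intro p; rw [hB' p]; exact key_one n F hF hFz hFx _ _ _
  have hsupp : ∀ (p : ℕ × ℕ × ℕ) (m : Fin 3 →₀ ℕ), coeff m (B p) ≠ 0 →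
      m 2 = p.2.2 ∧ m 0 + m 1 = p.1 + p.2.1 ∧ p.2.1 ≤ m 1 ∧
        (m 1 = p.2.1 → m = tri p.1 p.2.1 p.2.2) := by
    intro p m hm; rw [hB' p] at hm; exact key_supp n F hF hFz _ _ _ m hm
  constructor
  · rw [linearIndependent_iff]
    intro c hc
    by_contra hne
    obtain ⟨s, hs⟩ := Finsupp.support_nonempty_iff.mpr hne
    set T := c.support.filter
      (fun t : ℕ × ℕ × ℕ => t.1 + t.2.1 = s.1 + s.2.1 ∧ t.2.2 = s.2.2) with hT
    have hsT : s ∈ T := Finset.mem_filter.mpr ⟨hs, rfl, rfl⟩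
    obtain ⟨t, htT, htmin⟩ := T.exists_min_image (fun t => t.2.1) ⟨s, hsT⟩
    obtain ⟨htc, hts, htl⟩ := Finset.mem_filter.mp htT
    set d := tri t.1 t.2.1 t.2.2 with hd
    have hcoeff : coeff d (Finsupp.linearCombination K B c) = c t := by
      rw [Finsupp.linearCombination_apply, Finsupp.sum, coeff_sum]
      rw [Finset.sum_eq_single t]
      · rw [coeff_smul, hone t, smul_eq_mul, mul_one]
      · intro u hu hut
        rw [coeff_smul, smul_eq_mul]
        rcases eq_or_ne (coeff d (B u)) 0 with h | h
        · rw [h, mul_zero]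
        exfalso
        obtain ⟨h2, h01, hle, heq⟩ := hsupp u d h
        have hd0 : d 0 = t.1 := tri_apply0 _ _ _
        have hd1 : d 1 = t.2.1 := tri_apply1 _ _ _
        have hd2 : d 2 = t.2.2 := tri_apply2 _ _ _
        have huT : u ∈ T := by
          refine Finset.mem_filter.mpr ⟨hu, ?_, ?_⟩
          · omega
          · omega
        have hmin := htmin u huT
        have hu1 : d 1 = u.2.1 := by omega
        have := heq hu1
        rw [hd] at this
        have e0 : t.1 = u.1 := by
          have := congrArg (fun f : Fin 3 →₀ ℕ => f 0) this
          simpa [tri_apply0] using this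
        have e1 : t.2.1 = u.2.1 := by omega
        have e2 : t.2.2 = u.2.2 := by omega
        exact hut (Prod.ext e0 (Prod.ext e1 e2)).symm
      · intro h
        rw [Finsupp.notMem_support_iff.mp h, zero_smul, coeff_zero]
    rw [hc, coeff_zero] at hcoeff
    exact Finsupp.mem_support_iff.mp htc hcoeff.symm
  · rw [Submodule.eq_top_iff']
    intro p
    have hmono : ∀ a : ℕ, ∀ m : Fin 3 →₀ ℕ, m 0 = a →
        (monomial m (1 : K)) ∈ Submodule.span K (Set.range B) := by
      intro a
      induction a using Nat.strong_induction_on with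
      | _ a ih =>
        intro m hm0
        have hmt : m = tri (m 0) (m 1) (m 2) := eq_tri m _ _ _ rfl rfl rfl
        have hBmem : B (m 0, m 1, m 2) ∈ Submodule.span K (Set.range B) :=
          Submodule.subset_span ⟨_, rfl⟩
        set D := B (m 0, m 1, m 2) - monomial m 1 with hD
        have hDspan : D ∈ Submodule.span K (Set.range B) := by
          rw [D.as_sum]
          apply Submodule.sum_mem
          intro m' hm'
          have hcD : coeff m' D ≠ 0 := mem_support_iff.mp hm'
          have hmm : m' ≠ m := by
            intro h
            apply hcD
            have h1 := hone (m 0, m 1, m 2)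
            rw [← hmt] at h1
            rw [h, hD, coeff_sub, coeff_monomial, if_pos rfl, h1, sub_self]
          have hcB : coeff m' (B (m 0, m 1, m 2)) ≠ 0 := by
            intro h
            apply hcD
            rw [hD, coeff_sub, h, coeff_monomial, if_neg (Ne.symm hmm), sub_zero]
          obtain ⟨h2, h01, hle, heq⟩ := hsupp (m 0, m 1, m 2) m' hcB
          simp only at h2 h01 hle heq
          have hlt1 : m 1 < m' 1 := by
            rcases lt_or_eq_of_le hle with h | h
            · exact h
            · exact absurd ((heq h.symm).trans hmt.symm) hmm
          have hlt0 : m' 0 < a := by omega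
          have : monomial m' (coeff m' D) = (coeff m' D) • monomial m' (1 : K) := by
            rw [smul_monomial, smul_eq_mul, mul_one]
          rw [this]
          exact Submodule.smul_mem _ _ (ih (m' 0) hlt0 m' rfl)
        have : monomial m (1 : K) = B (m 0, m 1, m 2) - D := by rw [hD]; ring
        rw [this]
        exact Submodule.sub_mem _ hBmem hDspan
    rw [p.as_sum]
    apply Submodule.sum_mem
    intro m hm
    have : monomial m (coeff m p) = (coeff m p) • monomial m (1 : K) := by
      rw [smul_monomial, smul_eq_mul, mul_one]
    rw [this]
    exact Submodule.smul_mem _ _ (hmono (m 0) m rfl)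
end

section
/- Let I = (x,y)^m ∩ (z,F)^m inside K[x,y,z]. Then H_i y^j z^l ∈ (x,y)^m ∩ (z,F)^m if and only if i, j, l ≥ 0, i + ln ≥ mn, and i + j ≥ m. -/
open MvPolynomial

private lemma prod_mem_pow_card {R ι : Type*} [CommRing R] (I : Ideal R)
    (s : Finset ι) (f : ι → R) (h : ∀ k ∈ s, f k ∈ I) :
    (∏ k ∈ s, f k) ∈ I ^ s.card := by
  induction s using Finset.cons_induction with
  | empty => simp
  | cons a s ha ih =>
    rw [Finset.prod_cons, Finset.card_cons, pow_succ']
    exact Ideal.mul_mem_mul (h a (Finset.mem_cons_self a s))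
      (ih fun k hk => h k (Finset.mem_cons_of_mem hk))

set_option maxHeartbeats 1600000 in
theorem stmt_3 {K : Type*} [Field K] (n : ℕ) (hn : 0 < n)
    (c : Fin n → K) (hc : Function.Injective c) (hc0 : c ⟨0, hn⟩ = 0)
    (F : MvPolynomial (Fin 3) K)
    (hF : F = ∏ i : Fin n, (X 0 - MvPolynomial.C (c i) * X 1))
    (m : ℕ) (hm : 1 ≤ m) :
    ∀ i j t : ℕ,
      (X 0 ^ (i % n) * F ^ (i / n) * X 1 ^ j * X 2 ^ t ∈
          (Ideal.span {X 0, X 1} : Ideal (MvPolynomial (Fin 3) K)) ^ m ⊓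
            (Ideal.span {X 2, F}) ^ m) ↔
        (i + t * n ≥ m * n ∧ i + j ≥ m) := by
  intro i j t
  set e := i % n with he_def
  set a := i / n with ha_def
  have hea : e + n * a = i := Nat.mod_add_div i n
  have hen : e < n := Nat.mod_lt i hn
  -- F is nonzero
  have hFval : eval (fun k : Fin 3 => if k = 0 then (1 : K) else 0) F = 1 := by
    rw [hF, map_prod]; simp
  have hFne : F ≠ 0 := by
    intro h; rw [h] at hFval; simp at hFval
  set I1 : Ideal (MvPolynomial (Fin 3) K) := Ideal.span {X 0, X 1} with hI1
  set I2 : Ideal (MvPolynomial (Fin 3) K) := Ideal.span {X 2, F} with hI2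
  constructor
  · -- hard direction
    rintro ⟨h1, h2⟩
    have hune : (X 0 : MvPolynomial (Fin 3) K) ^ e * F ^ a * X 1 ^ j * X 2 ^ t ≠ 0 := by
      refine mul_ne_zero (mul_ne_zero (mul_ne_zero ?_ ?_) ?_) ?_ <;>
        exact pow_ne_zero _ (by first | exact MvPolynomial.X_ne_zero _ | exact hFne)
    -- Part A : i + j ≥ m using Φ2
    have partA : i + j ≥ m := by
      set Φ : MvPolynomial (Fin 3) K →ₐ[K] Polynomial (MvPolynomial (Fin 3) K) := aeval
        ![Polynomial.X * Polynomial.C (X 0), Polynomial.X * Polynomial.C (X 1),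
          Polynomial.C (X 2)] with hΦ
      have hΦ0 : Φ (X 0) = Polynomial.X * Polynomial.C (X 0) := by rw [hΦ]; simp
      have hΦ1 : Φ (X 1) = Polynomial.X * Polynomial.C (X 1) := by rw [hΦ]; simp
      have hΦ2 : Φ (X 2) = Polynomial.C (X 2) := by rw [hΦ]; simp
      have hΦF : Φ F = Polynomial.X ^ n * Polynomial.C F := by
        rw [hF, map_prod]
        have : ∀ k : Fin n, Φ (X 0 - MvPolynomial.C (c k) * X 1) =
            Polynomial.X * Polynomial.C (X 0 - MvPolynomial.C (c k) * X 1) := by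
          intro k
          rw [hΦ, map_sub, map_mul, aeval_C, Polynomial.algebraMap_apply,
            MvPolynomial.algebraMap_eq]
          simp only [map_sub, map_mul]
          simp
          try ring
        rw [Finset.prod_congr rfl fun k _ => this k, Finset.prod_mul_distrib,
          Finset.prod_const, ← map_prod, Finset.card_univ, Fintype.card_fin]
      have hmap : Ideal.map Φ I1 ≤ Ideal.span {Polynomial.X} := by
        rw [hI1, Ideal.map_span, Ideal.span_le]
        rintro _ ⟨g, hg, rfl⟩
        simp only [Set.mem_insert_iff, Set.mem_singleton_iff] at hg
        rcases hg with rfl | rfl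
        · rw [hΦ0]; exact Ideal.mem_span_singleton.2 (dvd_mul_right _ _)
        · rw [hΦ1]; exact Ideal.mem_span_singleton.2 (dvd_mul_right _ _)
      have hdvd : Polynomial.X ^ m ∣ Φ (X 0 ^ e * F ^ a * X 1 ^ j * X 2 ^ t) := by
        rw [← Ideal.mem_span_singleton, ← Ideal.span_singleton_pow]
        exact Ideal.pow_right_mono hmap m
          (by rw [← Ideal.map_pow]; exact Ideal.mem_map_of_mem Φ h1)
      have hΦu : Φ (X 0 ^ e * F ^ a * X 1 ^ j * X 2 ^ t) =
          Polynomial.X ^ (i + j) *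
            Polynomial.C (X 0 ^ e * F ^ a * X 1 ^ j * X 2 ^ t) := by
        rw [map_mul, map_mul, map_mul, map_pow, map_pow, map_pow, map_pow,
          hΦ0, hΦ1, hΦ2, hΦF, ← hea, map_mul, map_mul, map_mul, map_pow,
          map_pow, map_pow, map_pow]
        ring
      rw [hΦu] at hdvd
      by_contra hlt
      push_neg at hlt
      have := (Polynomial.X_pow_dvd_iff.1 hdvd) (i + j) hlt
      have h0 := Polynomial.coeff_X_pow_mul
        (Polynomial.C (X 0 ^ e * F ^ a * X 1 ^ j * X 2 ^ t)) (i + j) 0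
      rw [zero_add, this, Polynomial.coeff_C_zero] at h0
      exact hune h0.symm
    -- Part B : a + t ≥ m using Φ1
    have partB : a + t ≥ m := by
      set Φ : MvPolynomial (Fin 3) K →ₐ[K] Polynomial (MvPolynomial (Fin 3) K) := aeval
        ![Polynomial.C (X 0), Polynomial.C (X 1),
          Polynomial.X * Polynomial.C F] with hΦ
      have hΦ0 : Φ (X 0) = Polynomial.C (X 0) := by rw [hΦ]; simp
      have hΦ1 : Φ (X 1) = Polynomial.C (X 1) := by rw [hΦ]; simp
      have hΦ2 : Φ (X 2) = Polynomial.X * Polynomial.C F := by rw [hΦ]; simp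
      have hΦF : Φ F = Polynomial.C F := by
        conv_lhs => rw [hF]
        conv_rhs => rw [hF]
        rw [map_prod, map_prod]
        refine Finset.prod_congr rfl fun k _ => ?_
        rw [hΦ, map_sub, map_mul, aeval_C, Polynomial.algebraMap_apply,
          MvPolynomial.algebraMap_eq]
        simp only [map_sub, map_mul]
        simp
        try ring
      have hmap : Ideal.map Φ I2 ≤ Ideal.span {Polynomial.C F} := by
        rw [hI2, Ideal.map_span, Ideal.span_le]
        rintro _ ⟨g, hg, rfl⟩
        simp only [Set.mem_insert_iff, Set.mem_singleton_iff] at hg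
        rcases hg with rfl | rfl
        · rw [hΦ2]; exact Ideal.mem_span_singleton.2 (dvd_mul_left _ _)
        · rw [hΦF]; exact Ideal.mem_span_singleton.2 dvd_rfl
      have hdvd : Polynomial.C F ^ m ∣ Φ (X 0 ^ e * F ^ a * X 1 ^ j * X 2 ^ t) := by
        rw [← Ideal.mem_span_singleton, ← Ideal.span_singleton_pow]
        exact Ideal.pow_right_mono hmap m
          (by rw [← Ideal.map_pow]; exact Ideal.mem_map_of_mem Φ h2)
      have hΦu : Φ (X 0 ^ e * F ^ a * X 1 ^ j * X 2 ^ t) =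
          Polynomial.X ^ t * Polynomial.C (F ^ (a + t) * (X 0 ^ e * X 1 ^ j)) := by
        rw [map_mul, map_mul, map_mul, map_pow, map_pow, map_pow, map_pow,
          hΦ0, hΦ1, hΦ2, hΦF, map_mul, map_mul, map_pow, map_pow, map_pow,
          pow_add]
        ring
      rw [hΦu] at hdvd
      -- extract divisibility in R
      obtain ⟨h, hh⟩ := hdvd
      have hcoeff : F ^ (a + t) * (X 0 ^ e * X 1 ^ j) = F ^ m * h.coeff t := by
        have := congrArg (fun p => Polynomial.coeff p t) hh
        rw [← Polynomial.C_pow, Polynomial.coeff_C_mul] at this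
        have h0 := Polynomial.coeff_X_pow_mul
          (Polynomial.C (F ^ (a + t) * (X 0 ^ e * X 1 ^ j))) t 0
        rw [zero_add, Polynomial.coeff_C_zero] at h0
        rw [h0] at this
        exact this
      by_contra hlt
      push_neg at hlt
      have hFdvd : F ∣ X 0 ^ e * X 1 ^ j := by
        have hsplit : F ^ m = F ^ (a + t) * F ^ (m - (a + t)) := by
          rw [← pow_add, Nat.add_sub_cancel' (le_of_lt hlt)]
        rw [hsplit, mul_assoc] at hcoeff
        have := mul_left_cancel₀ (pow_ne_zero (a + t) hFne) hcoeff
        exact dvd_trans (dvd_pow_self F (Nat.sub_ne_zero_of_lt hlt)) ⟨h.coeff t, this⟩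
      -- evaluate at (c (n-1), 1, 1)
      set l : Fin n := ⟨n - 1, Nat.sub_lt hn one_pos⟩ with hl
      have hevF : eval ![c l, 1, 1] F = 0 := by
        rw [hF, map_prod]
        refine Finset.prod_eq_zero (Finset.mem_univ l) ?_
        simp
      obtain ⟨w, hw⟩ := hFdvd
      have hev := congrArg (eval ![c l, 1, 1]) hw
      rw [map_mul, map_mul, map_pow, map_pow, hevF, zero_mul] at hev
      simp only [eval_X] at hev
      have : (c l) ^ e = 0 := by
        simpa using hev
      rcases Nat.eq_zero_or_pos e with he0 | hepos
      · rw [he0, pow_zero] at this; exact one_ne_zero this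
      · have hcl : c l ≠ 0 := by
          intro h0
          have : l = ⟨0, hn⟩ := hc (by rw [h0, hc0])
          have : n - 1 = 0 := congrArg Fin.val this
          omega
        exact hcl (pow_eq_zero_iff (by omega) |>.1 this)
    refine ⟨?_, partA⟩
    nlinarith [hea, partB]
  · -- easy direction
    rintro ⟨h1, h2⟩
    constructor
    · -- membership in I1 ^ m
      have hX0 : (X 0 : MvPolynomial (Fin 3) K) ∈ I1 := Ideal.subset_span (by simp)
      have hX1 : (X 1 : MvPolynomial (Fin 3) K) ∈ I1 := Ideal.subset_span (by simp)
      have hFmem : F ∈ I1 ^ n := by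
        rw [hF]
        have := prod_mem_pow_card I1 Finset.univ
          (fun k : Fin n => X 0 - MvPolynomial.C (c k) * X 1)
          (fun k _ => Ideal.sub_mem _ hX0 (I1.mul_mem_left _ hX1))
        rwa [Finset.card_univ, Fintype.card_fin] at this
      have hmem : X 0 ^ e * F ^ a * X 1 ^ j ∈ I1 ^ (e + n * a + j) := by
        rw [pow_add, pow_add, pow_mul]
        exact Ideal.mul_mem_mul
          (Ideal.mul_mem_mul (Ideal.pow_mem_pow hX0 e) (Ideal.pow_mem_pow hFmem a))
          (Ideal.pow_mem_pow hX1 j)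
      have : X 0 ^ e * F ^ a * X 1 ^ j * X 2 ^ t ∈ I1 ^ (e + n * a + j) :=
        Ideal.mul_mem_right _ _ hmem
      exact Ideal.pow_le_pow_right (by omega) this
    · -- membership in I2 ^ m
      have hat : m ≤ a + t := by nlinarith [hea, hen, h1]
      have hX2 : (X 2 : MvPolynomial (Fin 3) K) ∈ I2 := Ideal.subset_span (by simp)
      have hFm : F ∈ I2 := Ideal.subset_span (by simp)
      have hmem : F ^ a * X 2 ^ t ∈ I2 ^ (a + t) := by
        rw [pow_add]
        exact Ideal.mul_mem_mul (Ideal.pow_mem_pow hFm a) (Ideal.pow_mem_pow hX2 t)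
      have heq : X 0 ^ e * F ^ a * X 1 ^ j * X 2 ^ t =
          (X 0 ^ e * X 1 ^ j) * (F ^ a * X 2 ^ t) := by ring
      rw [heq]
      exact Ideal.mul_mem_left _ _ (Ideal.pow_le_pow_right hat hmem)
end

section
/- Let I = (xz, yz, F) ⊆ K[x,y,z] be the ideal of n+1 almost collinear points and r ≥ 1. Then H_i y^j z^l ∈ I^r if and only if i, j, l ≥ 0 and either (1) l < j and i + nl ≥ rn, or (2) j ≤ l < i + j and i + j + (n−1)l ≥ rn, or (3) i + j ≤ l and r ≤ i + j. -/
open MvPolynomial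

lemma aux_prod_mem_pow {A : Type*} [CommRing A] (J : Ideal A) (s : Finset ℕ) (f : ℕ → A)
    (h : ∀ t ∈ s, f t ∈ J) : (∏ t ∈ s, f t) ∈ J ^ s.card := by
  classical
  induction s using Finset.induction with
  | empty => simp
  | @insert x s hx ih =>
    rw [Finset.prod_insert hx, Finset.card_insert_of_notMem hx, pow_succ,
      mul_comm (J ^ s.card) J]
    exact Ideal.mul_mem_mul (h x (Finset.mem_insert_self x s))
      (ih fun t ht => h t (Finset.mem_insert_of_mem ht))

set_option maxHeartbeats 3200000 in
theorem stmt_4 {K : Type*} [Field K] (n : ℕ) (hn : 3 ≤ n)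
    (c : Fin n → K) (hc : Function.Injective c) (hc0 : c ⟨0, by omega⟩ = 0)
    (F : MvPolynomial (Fin 3) K)
    (hF : F = ∏ i : Fin n, (X 0 - MvPolynomial.C (c i) * X 1))
    (I : Ideal (MvPolynomial (Fin 3) K))
    (hI : I = Ideal.span {X 0 * X 2, X 1 * X 2, F})
    (r : ℕ) (hr : 1 ≤ r) :
    ∀ i j l : ℕ,
      (X 0 ^ (i % n) * F ^ (i / n) * X 1 ^ j * X 2 ^ l ∈ I ^ r) ↔
        ((l < j ∧ i + n * l ≥ r * n) ∨
          (j ≤ l ∧ l < i + j ∧ i + j + (n - 1) * l ≥ r * n) ∨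
          (i + j ≤ l ∧ r ≤ i + j)) := by
  classical
  intro i j l
  set e := i % n with he_def
  set a := i / n with ha_def
  have hn0 : 0 < n := by omega
  have he : e < n := Nat.mod_lt _ hn0
  have hi : i = n * a + e := (Nat.div_add_mod i n).symm
  clear he_def ha_def
  clear_value e a
  have hcomm : r * n = n * r := Nat.mul_comm r n
  -- extension of c to ℕ
  set d : ℕ → K := fun t => if h : t < n then c ⟨t, h⟩ else 0 with hd_def
  have hFd : F = ∏ t ∈ Finset.range n, (X 0 - MvPolynomial.C (d t) * X 1) := by
    rw [hF, ← Fin.prod_univ_eq_prod_range (fun t => X 0 - MvPolynomial.C (d t) * X 1) n]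
    refine Finset.prod_congr rfl fun t _ => ?_
    simp [hd_def, t.isLt]
  -- generators
  have hxz : X 0 * X 2 ∈ I := hI ▸ Ideal.subset_span (by simp)
  have hyz : X 1 * X 2 ∈ I := hI ▸ Ideal.subset_span (by simp)
  have hFI : F ∈ I := hI ▸ Ideal.subset_span (by simp)
  have hlin : ∀ k : K, (X 0 - MvPolynomial.C k * X 1) * X 2 ∈ I := by
    intro k
    have h : (X 0 - MvPolynomial.C k * X 1) * X 2
        = X 0 * X 2 - MvPolynomial.C k * (X 1 * X 2 : MvPolynomial (Fin 3) K) := by ring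
    rw [h]
    exact Ideal.sub_mem _ hxz (Ideal.mul_mem_left _ _ hyz)
  have MUL : ∀ {p q : ℕ} {u v : MvPolynomial (Fin 3) K},
      u ∈ I ^ p → v ∈ I ^ q → u * v ∈ I ^ (p + q) := by
    intro p q u v hu hv
    rw [pow_add]
    exact Ideal.mul_mem_mul hu hv
  -- F times X2^k is in I^k for k ≤ n
  have FX2 : ∀ k, k ≤ n → F * X 2 ^ k ∈ I ^ k := by
    intro k hk
    have hsplit := Finset.prod_range_add
      (fun t => (X 0 : MvPolynomial (Fin 3) K) - MvPolynomial.C (d t) * X 1) k (n - k)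
    rw [show k + (n - k) = n by omega] at hsplit
    have key : F * X 2 ^ k
        = (∏ t ∈ Finset.range k, ((X 0 - MvPolynomial.C (d t) * X 1) * X 2))
          * ∏ t ∈ Finset.range (n - k), (X 0 - MvPolynomial.C (d (k + t)) * X 1) := by
      rw [Finset.prod_mul_distrib, Finset.prod_const, Finset.card_range, hFd, hsplit]
      ring
    rw [key]
    refine Ideal.mul_mem_right _ _ ?_
    have h2 := aux_prod_mem_pow I (Finset.range k)
      (fun t => (X 0 - MvPolynomial.C (d t) * X 1) * X 2) (fun t _ => hlin (d t))
    rwa [Finset.card_range] at h2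
  -- pairing lemma
  have PAIR : ∀ a' e' w, w ≤ e' + n * a' → X 0 ^ e' * F ^ a' * X 2 ^ w ∈ I ^ w := by
    intro a'
    induction a' with
    | zero =>
      intro e' w hw
      obtain ⟨u, hu⟩ : ∃ u, e' = w + u := ⟨e' - w, by omega⟩
      subst hu
      have key : X 0 ^ (w + u) * F ^ 0 * X 2 ^ w = (X 0 * X 2) ^ w * X 0 ^ u := by ring
      rw [key]
      exact Ideal.mul_mem_right _ _ (Ideal.pow_mem_pow hxz w)
    | succ a' ih =>
      intro e' w hw
      by_cases hwe : w ≤ e' + n * a'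
      · have key : X 0 ^ e' * F ^ (a' + 1) * X 2 ^ w = F * (X 0 ^ e' * F ^ a' * X 2 ^ w) := by
          ring
        rw [key]
        exact Ideal.mul_mem_left _ _ (ih e' w hwe)
      · by_cases hnw : n ≤ w
        · obtain ⟨w', hw'⟩ : ∃ w', w = n + w' := ⟨w - n, by omega⟩
          subst hw'
          have hexp : n * (a' + 1) = n * a' + n := by ring
          have hw'' : w' ≤ e' + n * a' := by omega
          have key : X 0 ^ e' * F ^ (a' + 1) * X 2 ^ (n + w')
              = (F * X 2 ^ n) * (X 0 ^ e' * F ^ a' * X 2 ^ w') := by ring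
          rw [key]
          exact MUL (FX2 n le_rfl) (ih e' w' hw'')
        · push_neg at hnw
          have key : X 0 ^ e' * F ^ (a' + 1) * X 2 ^ w
              = (X 0 ^ e' * F ^ a') * (F * X 2 ^ w) := by ring
          rw [key]
          exact Ideal.mul_mem_left _ _ (FX2 w (by omega))
  -- master sufficiency
  have SUF : ∀ u v w : ℕ, u + v + w = r → u ≤ j → v ≤ a → u + w ≤ l →
      w ≤ e + n * (a - v) → X 0 ^ e * F ^ a * X 1 ^ j * X 2 ^ l ∈ I ^ r := by
    intro u v w huvw hu hv hul hw
    obtain ⟨a', ha'⟩ : ∃ a', a = v + a' := ⟨a - v, by omega⟩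
    obtain ⟨j', hj'⟩ : ∃ j', j = u + j' := ⟨j - u, by omega⟩
    obtain ⟨l', hl'⟩ : ∃ l', l = (u + w) + l' := ⟨l - (u + w), by omega⟩
    have hw2 : w ≤ e + n * a' := by
      have hav : a - v = a' := by omega
      rwa [hav] at hw
    have key : X 0 ^ e * F ^ a * X 1 ^ j * X 2 ^ l
        = (((X 1 * X 2) ^ u * F ^ v) * (X 0 ^ e * F ^ a' * X 2 ^ w))
          * (X 1 ^ j' * X 2 ^ l') := by
      rw [ha', hj', hl']; ring
    rw [key, ← huvw]
    exact Ideal.mul_mem_right _ _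
      (MUL (MUL (Ideal.pow_mem_pow hyz u) (Ideal.pow_mem_pow hFI v)) (PAIR a' e w hw2))
  constructor
  · -- necessity
    intro hmem
    have hLne : ∀ k : K, (X 0 - MvPolynomial.C k * X 1 : MvPolynomial (Fin 3) K) ≠ 0 := by
      intro k h
      have h2 := congrArg (eval (fun s : Fin 3 => if s = 0 then (1 : K) else 0)) h
      simp at h2
    have hFne : F ≠ 0 := by
      rw [hF]
      exact Finset.prod_ne_zero_iff.mpr fun t _ => hLne (c t)
    have helemne : X 0 ^ e * F ^ a * X 1 ^ j * X 2 ^ l ≠ (0 : MvPolynomial (Fin 3) K) := by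
      refine mul_ne_zero (mul_ne_zero (mul_ne_zero ?_ ?_) ?_) ?_ <;>
        exact pow_ne_zero _ (by first | exact X_ne_zero _ | exact hFne)
    have NEC : ∀ (f : Fin 3 → Polynomial (MvPolynomial (Fin 3) K)) (m wt : ℕ)
        (g : Polynomial (MvPolynomial (Fin 3) K)),
        (∀ p ∈ ({X 0 * X 2, X 1 * X 2, F} : Set (MvPolynomial (Fin 3) K)),
          Polynomial.X ^ m ∣ (aeval f) p) →
        (aeval f) (X 0 ^ e * F ^ a * X 1 ^ j * X 2 ^ l) = Polynomial.X ^ wt * g →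
        g.coeff 0 ≠ 0 → m * r ≤ wt := by
      intro f m wt g hgen heq hg0
      have h1 : Ideal.map (aeval f) I ≤ Ideal.span {Polynomial.X ^ m} := by
        rw [hI, Ideal.map_span, Ideal.span_le]
        rintro q ⟨p, hp, rfl⟩
        exact Ideal.mem_span_singleton.mpr (hgen p hp)
      have h2 : (aeval f) (X 0 ^ e * F ^ a * X 1 ^ j * X 2 ^ l)
          ∈ Ideal.span {Polynomial.X ^ (m * r)} := by
        have h3 := Ideal.mem_map_of_mem (aeval f) hmem
        rw [Ideal.map_pow] at h3
        have h4 : (Ideal.map (aeval f) I) ^ r ≤ Ideal.span {Polynomial.X ^ m} ^ r :=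
          Ideal.pow_right_mono h1 r
        rw [Ideal.span_singleton_pow, ← pow_mul] at h4
        exact h4 h3
      rw [heq] at h2
      have hdvd : Polynomial.X ^ (m * r) ∣ Polynomial.X ^ wt * g :=
        Ideal.mem_span_singleton.mp h2
      by_contra hcon
      push_neg at hcon
      have h5 := (Polynomial.X_pow_dvd_iff.mp hdvd) wt hcon
      have h6 := Polynomial.coeff_X_pow_mul g wt 0
      rw [Nat.zero_add] at h6
      rw [h6] at h5
      exact hg0 h5
    -- cases A and B share the images of X0 and X1
    have haF : ∀ f2 : Polynomial (MvPolynomial (Fin 3) K),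
        (aeval ![Polynomial.X * Polynomial.C (X 0), Polynomial.X * Polynomial.C (X 1), f2]) F
          = Polynomial.X ^ n * Polynomial.C F := by
      intro f2
      conv_lhs => rw [hF]
      rw [map_prod]
      have hstep : ∀ t : Fin n,
          (aeval ![Polynomial.X * Polynomial.C (X 0), Polynomial.X * Polynomial.C (X 1), f2])
            (X 0 - MvPolynomial.C (c t) * X 1)
          = Polynomial.X * Polynomial.C (X 0 - MvPolynomial.C (c t) * X 1) := by
        intro t
        rw [map_sub, map_mul, aeval_X, aeval_X, aeval_C]
        simp only [Matrix.cons_val_zero, Matrix.cons_val_one, Matrix.head_cons]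
        rw [Polynomial.algebraMap_apply, MvPolynomial.algebraMap_eq]
        rw [map_sub Polynomial.C (X 0 : MvPolynomial (Fin 3) K), map_mul Polynomial.C]
        ring
      rw [Finset.prod_congr rfl fun t _ => hstep t, Finset.prod_mul_distrib,
        Finset.prod_const, Finset.card_univ, Fintype.card_fin,
        ← map_prod (Polynomial.C : MvPolynomial (Fin 3) K →+* Polynomial (MvPolynomial (Fin 3) K))
          (fun t : Fin n => X 0 - MvPolynomial.C (c t) * X 1) Finset.univ, ← hF]
    have hABe : ∀ f2 : Polynomial (MvPolynomial (Fin 3) K),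
        (aeval ![Polynomial.X * Polynomial.C (X 0), Polynomial.X * Polynomial.C (X 1), f2])
          (X 0 ^ e * F ^ a * X 1 ^ j * X 2 ^ l)
        = Polynomial.X ^ (e + n * a + j)
            * (Polynomial.C (X 0) ^ e * Polynomial.C F ^ a * Polynomial.C (X 1) ^ j
                * f2 ^ l) := by
      intro f2
      rw [map_mul, map_mul, map_mul, map_pow, map_pow, map_pow, map_pow,
        aeval_X, aeval_X, aeval_X, haF f2]
      simp only [Matrix.cons_val_zero, Matrix.cons_val_one, Matrix.head_cons,
        Matrix.cons_val_two, Matrix.tail_cons]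
      rw [mul_pow, mul_pow, mul_pow, ← pow_mul]
      ring
    have hA : r ≤ e + n * a + j := by
      have h0 := NEC ![Polynomial.X * Polynomial.C (X 0), Polynomial.X * Polynomial.C (X 1),
          Polynomial.C (X 2)] 1 (e + n * a + j)
          (Polynomial.C (X 0) ^ e * Polynomial.C F ^ a * Polynomial.C (X 1) ^ j
            * Polynomial.C (X 2) ^ l) ?_ ?_ ?_
      · omega
      · intro p hp
        simp only [Set.mem_insert_iff, Set.mem_singleton_iff] at hp
        rcases hp with rfl | rfl | rfl
        · rw [map_mul, aeval_X, aeval_X]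
          simp only [Matrix.cons_val_zero, Matrix.cons_val_one, Matrix.head_cons,
            Matrix.cons_val_two, Matrix.tail_cons]
          rw [pow_one]
          exact ⟨Polynomial.C (X 0) * Polynomial.C (X 2), by ring⟩
        · rw [map_mul, aeval_X, aeval_X]
          simp only [Matrix.cons_val_zero, Matrix.cons_val_one, Matrix.head_cons,
            Matrix.cons_val_two, Matrix.tail_cons]
          rw [pow_one]
          exact ⟨Polynomial.C (X 1) * Polynomial.C (X 2), by ring⟩
        · rw [haF, pow_one]
          exact Dvd.dvd.mul_right (dvd_pow_self _ (by omega : n ≠ 0)) _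
      · exact hABe _
      · rw [Polynomial.coeff_zero_eq_eval_zero]
        simp only [Polynomial.eval_mul, Polynomial.eval_pow, Polynomial.eval_C]
        exact helemne
    have hXn : (Polynomial.X : Polynomial (MvPolynomial (Fin 3) K)) ^ n
        = Polynomial.X * Polynomial.X ^ (n - 1) := by
      conv_lhs => rw [show n = 1 + (n - 1) by omega]
      rw [pow_add, pow_one]
    have hB : n * r ≤ e + n * a + j + (n - 1) * l := by
      refine NEC ![Polynomial.X * Polynomial.C (X 0), Polynomial.X * Polynomial.C (X 1),
          Polynomial.X ^ (n - 1) * Polynomial.C (X 2)] n (e + n * a + j + (n - 1) * l)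
          (Polynomial.C (X 0) ^ e * Polynomial.C F ^ a * Polynomial.C (X 1) ^ j
            * Polynomial.C (X 2) ^ l) ?_ ?_ ?_
      · intro p hp
        simp only [Set.mem_insert_iff, Set.mem_singleton_iff] at hp
        rcases hp with rfl | rfl | rfl
        · rw [map_mul, aeval_X, aeval_X]
          simp only [Matrix.cons_val_zero, Matrix.cons_val_one, Matrix.head_cons,
            Matrix.cons_val_two, Matrix.tail_cons]
          exact ⟨Polynomial.C (X 0) * Polynomial.C (X 2), by rw [hXn]; ring⟩
        · rw [map_mul, aeval_X, aeval_X]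
          simp only [Matrix.cons_val_zero, Matrix.cons_val_one, Matrix.head_cons,
            Matrix.cons_val_two, Matrix.tail_cons]
          exact ⟨Polynomial.C (X 1) * Polynomial.C (X 2), by rw [hXn]; ring⟩
        · rw [haF]
          exact Dvd.dvd.mul_right dvd_rfl _
      · rw [hABe]
        rw [mul_pow, ← pow_mul, pow_add]
        ring
      · rw [Polynomial.coeff_zero_eq_eval_zero]
        simp only [Polynomial.eval_mul, Polynomial.eval_pow, Polynomial.eval_C]
        exact helemne
    -- case C
    have h1n : 1 < n := by omega
    set κ := c ⟨1, h1n⟩ with hκdef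
    have hκ : κ ≠ 0 := by
      rw [hκdef, ← hc0]
      intro h
      have h2 := hc h
      simp [Fin.ext_iff] at h2
    set fC : Fin 3 → Polynomial (MvPolynomial (Fin 3) K) :=
      ![Polynomial.X * Polynomial.C (X 0) + Polynomial.C (MvPolynomial.C κ * X 1),
        Polynomial.C (X 1), Polynomial.X * Polynomial.C (X 2)] with hfC
    set P : Polynomial (MvPolynomial (Fin 3) K) :=
      ∏ t ∈ Finset.univ.erase (⟨1, h1n⟩ : Fin n),
        (Polynomial.X * Polynomial.C (X 0)
          + Polynomial.C ((MvPolynomial.C κ - MvPolynomial.C (c t)) * X 1)) with hP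
    have hfac : ∀ t : Fin n, (aeval fC) (X 0 - MvPolynomial.C (c t) * X 1)
        = Polynomial.X * Polynomial.C (X 0)
          + Polynomial.C ((MvPolynomial.C κ - MvPolynomial.C (c t)) * X 1) := by
      intro t
      rw [map_sub, map_mul, aeval_X, aeval_X, aeval_C]
      simp only [hfC, Matrix.cons_val_zero, Matrix.cons_val_one, Matrix.head_cons]
      rw [Polynomial.algebraMap_apply, MvPolynomial.algebraMap_eq]
      simp only [map_mul, map_sub]
      ring
    have hCF : (aeval fC) F = Polynomial.X * (Polynomial.C (X 0) * P) := by
      have h1 : (aeval fC) F = ∏ t : Fin n, (Polynomial.X * Polynomial.C (X 0)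
          + Polynomial.C ((MvPolynomial.C κ - MvPolynomial.C (c t)) * X 1)) := by
        conv_lhs => rw [hF]
        rw [map_prod]
        exact Finset.prod_congr rfl fun t _ => hfac t
      rw [h1, ← Finset.mul_prod_erase Finset.univ _ (Finset.mem_univ (⟨1, h1n⟩ : Fin n)),
        ← hκdef, sub_self, zero_mul, map_zero, add_zero, ← hP, mul_assoc]
    have hC : r ≤ a + l := by
      have h0 := NEC fC 1 (a + l)
          ((Polynomial.X * Polynomial.C (X 0) + Polynomial.C (MvPolynomial.C κ * X 1)) ^ e
            * Polynomial.C (X 0) ^ a * P ^ a * Polynomial.C (X 1) ^ j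
            * Polynomial.C (X 2) ^ l) ?_ ?_ ?_
      · omega
      · intro p hp
        simp only [Set.mem_insert_iff, Set.mem_singleton_iff] at hp
        rcases hp with rfl | rfl | rfl
        · rw [map_mul, aeval_X, aeval_X]
          simp only [hfC, Matrix.cons_val_zero, Matrix.cons_val_one, Matrix.head_cons,
            Matrix.cons_val_two, Matrix.tail_cons]
          rw [pow_one]
          exact ⟨(Polynomial.X * Polynomial.C (X 0)
            + Polynomial.C (MvPolynomial.C κ * X 1)) * Polynomial.C (X 2), by ring⟩
        · rw [map_mul, aeval_X, aeval_X]
          simp only [hfC, Matrix.cons_val_zero, Matrix.cons_val_one, Matrix.head_cons,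
            Matrix.cons_val_two, Matrix.tail_cons]
          rw [pow_one]
          exact ⟨Polynomial.C (X 1) * Polynomial.C (X 2), by ring⟩
        · rw [hCF, pow_one]
          exact Dvd.dvd.mul_right dvd_rfl _
      · rw [map_mul, map_mul, map_mul, map_pow, map_pow, map_pow, map_pow,
          aeval_X, aeval_X, aeval_X, hCF]
        simp only [hfC, Matrix.cons_val_zero, Matrix.cons_val_one, Matrix.head_cons,
          Matrix.cons_val_two, Matrix.tail_cons]
        rw [mul_pow, mul_pow, pow_add]
        ring
      · rw [Polynomial.coeff_zero_eq_eval_zero]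
        simp only [Polynomial.eval_mul, Polynomial.eval_pow, Polynomial.eval_add,
          Polynomial.eval_C, Polynomial.eval_X, hP, Polynomial.eval_prod, zero_mul, zero_add]
        refine mul_ne_zero (mul_ne_zero (mul_ne_zero (mul_ne_zero ?_ ?_) ?_) ?_) ?_
        · refine pow_ne_zero _ (mul_ne_zero ?_ (X_ne_zero _))
          intro hh
          refine hκ ?_
          simpa using congrArg (MvPolynomial.coeff 0) hh
        · exact pow_ne_zero _ (X_ne_zero _)
        · refine pow_ne_zero _ (Finset.prod_ne_zero_iff.mpr fun t ht => ?_)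
          refine mul_ne_zero (sub_ne_zero.mpr fun hh => ?_) (X_ne_zero _)
          have h8 : κ = c t := by simpa using congrArg (MvPolynomial.coeff 0) hh
          have h9 : (⟨1, h1n⟩ : Fin n) = t := hc (by rw [← hκdef]; exact h8)
          exact (Finset.mem_erase.mp ht).1 h9.symm
        · exact pow_ne_zero _ (X_ne_zero _)
        · exact pow_ne_zero _ (X_ne_zero _)
    -- combine
    have hmul : n * (a + l) = n * a + n * l := by ring
    have hmul2 : n * r ≤ n * (a + l) := Nat.mul_le_mul_left n hC
    have hnl : (n - 1) * l + l = n * l := by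
      have h9 : n - 1 + 1 = n := by omega
      calc (n - 1) * l + l = ((n - 1) + 1) * l := by ring
        _ = n * l := by rw [h9]
    by_cases hlj : l < j
    · exact Or.inl ⟨hlj, by omega⟩
    · by_cases hlij : l < i + j
      · exact Or.inr (Or.inl ⟨by omega, hlij, by omega⟩)
      · exact Or.inr (Or.inr ⟨by omega, by omega⟩)
  · -- sufficiency
    rintro (⟨h1, h2⟩ | ⟨h1, h2, h3⟩ | ⟨h1, h2⟩)
    · -- case 1 : l < j, i + n*l ≥ r*n
      have hC : r ≤ a + l := by
        by_contra hcon
        push_neg at hcon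
        have hx1 : n * (a + l + 1) ≤ n * r := Nat.mul_le_mul_left n hcon
        have hx2 : n * (a + l + 1) = n * a + n * l + n := by ring
        omega
      rcases le_total l r with h | h
      · exact SUF l (r - l) 0 (by omega) (by omega) (by omega) (by omega) (by omega)
      · exact SUF r 0 0 (by omega) (by omega) (by omega) (by omega) (by omega)
    · -- case 2 : j ≤ l < i + j, i + j + (n-1) l ≥ r n
      have hnl : (n - 1) * l + l = n * l := by
        have h9 : n - 1 + 1 = n := by omega
        calc (n - 1) * l + l = ((n - 1) + 1) * l := by ring
          _ = n * l := by rw [h9]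
      have hC : r ≤ a + l := by
        by_contra hcon
        push_neg at hcon
        have hx1 : n * (a + l + 1) ≤ n * r := Nat.mul_le_mul_left n hcon
        have hx2 : n * (a + l + 1) = n * a + n * l + n := by ring
        omega
      rcases le_total r j with h | h
      · exact SUF r 0 0 (by omega) (by omega) (by omega) (by omega) (by omega)
      · rcases le_total r l with h' | h'
        · refine SUF j 0 (r - j) (by omega) (by omega) (by omega) (by omega) ?_
          rw [Nat.sub_zero]
          omega
        · -- l < r : u = j, v = r - l, w = l - j
          obtain ⟨a'', ha''⟩ : ∃ a'', a = (r - l) + a'' := ⟨a - (r - l), by omega⟩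
          refine SUF j (r - l) (l - j) (by omega) (by omega) (by omega) (by omega) ?_
          have hav : a - (r - l) = a'' := by omega
          rw [hav]
          rw [ha''] at hi
          have hx1 : n * ((r - l) + a'') = n * (r - l) + n * a'' := by ring
          have hx2 : n * ((r - l) + l) = n * (r - l) + n * l := by ring
          rw [show (r - l) + l = r by omega] at hx2
          omega
    · -- case 3 : i + j ≤ l, r ≤ i + j
      rcases le_total r j with h | h
      · exact SUF r 0 0 (by omega) (by omega) (by omega) (by omega) (by omega)
      · refine SUF j 0 (r - j) (by omega) (by omega) (by omega) (by omega) ?_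
        rw [Nat.sub_zero]
        omega
end

section
/- For n ≥ 3 and m ≥ r ≥ 1, there exist nonnegative integers (i, l) satisfying i ≥ m, i + nl ≥ mn, l ≤ i − 1, and i + (n−1)l ≤ rn − 1 if and only if m ≤ (n²r − n)/(n² − n + 1). -/
theorem stmt_8 (n m r : ℕ) (hn : 3 ≤ n) (hr : 1 ≤ r) (hmr : r ≤ m) :
    (∃ i l : ℕ, i ≥ m ∧ i + n * l ≥ m * n ∧ l ≤ i - 1 ∧
        i + (n - 1) * l ≤ r * n - 1) ↔
      m * (n ^ 2 - n + 1) ≤ n ^ 2 * r - n := by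
  have hm1 : 1 ≤ m := le_trans hr hmr
  have hn1 : 1 ≤ n := by omega
  have hrn : 1 ≤ r * n := Nat.one_le_iff_ne_zero.mpr (by positivity)
  have hnn : n ≤ n ^ 2 := by nlinarith
  have hnnr : n ≤ n ^ 2 * r := le_trans hnn (by nlinarith)
  constructor
  · rintro ⟨i, l, h1, h2, h3, h4⟩
    have hi1 : 1 ≤ i := le_trans hm1 h1
    zify [hi1, hn1, hrn, hnn, hnnr] at h1 h2 h3 h4 ⊢
    have hn' : (3:ℤ) ≤ (n:ℤ) := by exact_mod_cast hn
    nlinarith [h1, h2, h4, hn', mul_le_mul_of_nonneg_left h2 (by linarith : (0:ℤ) ≤ (n:ℤ) - 1),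
      mul_le_mul_of_nonneg_left h4 (by linarith : (0:ℤ) ≤ (n:ℤ))]
  · intro h
    set c := (m + n - 1) / n with hc
    have hd := Nat.div_add_mod (m + n - 1) n
    have hmod := Nat.mod_lt (m + n - 1) (show 0 < n by omega)
    have hB : m ≤ n * c := by
      rw [← hc] at hd
      generalize ht : n * c = t at hd ⊢
      omega
    have hA : n * c ≤ m + n - 1 := by
      rw [← hc] at hd
      generalize ht : n * c = t at hd ⊢
      omega
    have hc1 : 1 ≤ c := by
      rw [hc, Nat.one_le_div_iff (by omega : 0 < n)]
      omega
    have hcm : c ≤ m := by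
      by_contra hcon
      push_neg at hcon
      have h2 : n * (m + 1) ≤ n * c := Nat.mul_le_mul_left n hcon
      have h3 : m ≤ n * m := Nat.le_mul_of_pos_left m (by omega)
      rw [mul_add, mul_one] at h2
      generalize hg1 : n * c = t at hA h2
      generalize hg2 : n * m = u at h3 h2
      omega
    refine ⟨n * c, m - c, hB, ?_, ?_, ?_⟩
    · zify [hcm]
      ring_nf
      nlinarith
    · -- m - c ≤ n * c - 1
      have h1c : 1 ≤ n * c := le_trans hm1 hB
      zify [hcm, h1c]
      have hB' : (m:ℤ) ≤ (n:ℤ) * c := by exact_mod_cast hB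
      have hc1' : (1:ℤ) ≤ (c:ℤ) := by exact_mod_cast hc1
      linarith
    · zify [hcm, hn1, hrn, hnn, hnnr] at h ⊢
      have hA' : (n:ℤ) * c ≤ (m:ℤ) + n - 1 := by
        have := hA
        zify [show 1 ≤ m + n by omega] at this
        convert this using 2
      have hn' : (0:ℤ) < (n:ℤ) := by positivity
      nlinarith [hA', h, hn']
end

section
/- Let I be the ideal of a nearly-complete intersection of 2n+1 points and F = z^n − ∏_{i=1}^n (z − β_i x) − ∏_{i=1}^n (z − α_i y). Then I = (x,y) ∩ (xy, F) = (xy, xF, yF), and for all m ≥ 1, I^(m) = (x,y)^m ∩ (xy, F)^m. -/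
namespace NCIaux

section APart
open Polynomial
variable {A : Type*} [CommRing A]

def coeffDvdIdeal (p : A) (m : ℕ) : Ideal (Polynomial A) where
  carrier := {g | ∀ j < m, p ^ (m - j) ∣ g.coeff j}
  add_mem' := fun hf hg j hj => by
    rw [Polynomial.coeff_add]; exact dvd_add (hf j hj) (hg j hj)
  zero_mem' := fun j hj => by simp
  smul_mem' := fun c g hg j hj => by
    rw [smul_eq_mul, Polynomial.coeff_mul]
    refine Finset.dvd_sum fun u hu => ?_
    have h2 : u.2 ≤ j := by
      have := Finset.HasAntidiagonal.mem_antidiagonal.mp hu; omega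
    exact Dvd.dvd.mul_left (dvd_trans (pow_dvd_pow p (by omega)) (hg u.2 (lt_of_le_of_lt h2 hj))) _

lemma mem_coeffDvdIdeal {p : A} {m : ℕ} {g : Polynomial A} :
    g ∈ coeffDvdIdeal p m ↔ ∀ j < m, p ^ (m - j) ∣ g.coeff j := Iff.rfl

lemma span_mul_coeffDvd_le (p : A) (m : ℕ) :
    Ideal.span {X, C p} * coeffDvdIdeal p m ≤ coeffDvdIdeal p (m + 1) := by
  rw [Ideal.mul_le]
  intro r hr s hs
  obtain ⟨u, v, huv⟩ := Ideal.mem_span_pair.mp hr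
  have hX : X * s ∈ coeffDvdIdeal p (m + 1) := by
    intro j hj
    cases j with
    | zero => simp [Polynomial.coeff_X_mul_zero]
    | succ i =>
      rw [Polynomial.coeff_X_mul]
      have : m + 1 - (i + 1) = m - i := by omega
      rw [this]
      exact hs i (by omega)
  have hC : C p * s ∈ coeffDvdIdeal p (m + 1) := by
    intro j hj
    rw [Polynomial.coeff_C_mul]
    rcases Nat.lt_or_ge j m with h | h
    · have : m + 1 - j = (m - j) + 1 := by omega
      rw [this, pow_succ, mul_comm (p ^ (m-j)) p]
      exact mul_dvd_mul_left p (hs j h)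
    · have : m + 1 - j = 1 := by omega
      rw [this, pow_one]
      exact Dvd.dvd.mul_right (dvd_refl p) _
  have : r * s = u * (X * s) + v * (C p * s) := by rw [← huv]; ring
  rw [this]
  exact Ideal.add_mem _ (Ideal.mul_mem_left _ _ hX) (Ideal.mul_mem_left _ _ hC)

lemma span_pow_le_coeffDvd (p : A) (m : ℕ) :
    Ideal.span {X, C p} ^ m ≤ coeffDvdIdeal p m := by
  induction m with
  | zero => intro g _ j hj; omega
  | succ m ih =>
    rw [pow_succ, mul_comm]
    exact le_trans (Ideal.mul_mono_right ih) (span_mul_coeffDvd_le p m)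

lemma coeffDvd_le_span_pow (p : A) (m : ℕ) :
    coeffDvdIdeal p m ≤ Ideal.span {X, C p} ^ m := by
  induction m with
  | zero => intro g _; simp
  | succ m ih =>
    intro g hg
    have hdecomp : X * g.divX + C (g.coeff 0) = g := Polynomial.X_mul_divX_add g
    have h0 : (C (g.coeff 0) : Polynomial A) ∈ Ideal.span {X, C p} ^ (m + 1) := by
      obtain ⟨c, hc⟩ := hg 0 (by omega)
      have : (C (g.coeff 0) : Polynomial A) = (C p) ^ (m + 1 - 0) * C c := by
        rw [← Polynomial.C_pow, ← Polynomial.C_mul, ← hc]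
      rw [this]
      have : m + 1 - 0 = m + 1 := rfl
      rw [this]
      exact Ideal.mul_mem_right _ _ (Ideal.pow_mem_pow (Ideal.subset_span (by simp)) _)
    have hX : X * g.divX ∈ Ideal.span {X, C p} ^ (m + 1) := by
      have hdiv : g.divX ∈ coeffDvdIdeal p m := by
        intro j hj
        rw [Polynomial.coeff_divX]
        have : m - j = m + 1 - (j + 1) := by omega
        rw [this]
        exact hg (j + 1) (by omega)
      rw [pow_succ, mul_comm (Ideal.span {X, C p} ^ m)]
      exact Ideal.mul_mem_mul (Ideal.subset_span (by simp)) (ih hdiv)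
    rw [← hdecomp]
    exact Ideal.add_mem _ hX h0

lemma mem_span_pair_pow_iff {p : A} {m : ℕ} {g : Polynomial A} :
    g ∈ Ideal.span {X, C p} ^ m ↔ ∀ j < m, p ^ (m - j) ∣ g.coeff j :=
  ⟨fun h => span_pow_le_coeffDvd p m h, fun h => coeffDvd_le_span_pow p m h⟩
end APart

section BPart
variable {R S : Type*} [CommRing R] [CommRing S]

lemma mem_iff_map_mem (e : R ≃+* S) (I : Ideal R) (g : R) :
    g ∈ I ↔ e g ∈ I.map (e : R →+* S) := by
  constructor
  · exact fun h => Ideal.mem_map_of_mem _ h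
  · intro h
    obtain ⟨w, hw, hwg⟩ := Ideal.mem_map_iff_of_surjective _ e.surjective |>.mp h
    rwa [← e.injective hwg]

lemma map_span_pair_pow (e : R ≃+* S) (u v : R) (m : ℕ) :
    (Ideal.span {u, v} ^ m).map (e : R →+* S) = Ideal.span {e u, e v} ^ m := by
  rw [Ideal.map_pow, Ideal.map_span, Set.image_insert_eq, Set.image_singleton]
  rfl

lemma mem_span_pair_pow_iff_map (e : R ≃+* S) (u v g : R) (m : ℕ) :
    g ∈ Ideal.span {u, v} ^ m ↔ e g ∈ Ideal.span {e u, e v} ^ m := by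
  rw [mem_iff_map_mem e _ g, map_span_pair_pow]

lemma span_pair_eq_sup (u v : R) : Ideal.span {u, v} = Ideal.span {u} ⊔ Ideal.span {v} :=
  Ideal.span_insert u {v}

lemma rep_lemma (u v : R) (m : ℕ) :
    Ideal.span {u, v} ^ (m + 1) =
      Ideal.span {u} * Ideal.span {u, v} ^ m ⊔ Ideal.span {v ^ (m + 1)} := by
  have hu : Ideal.span {u} ≤ Ideal.span {u, v} := Ideal.span_mono (by simp)
  have hv : v ^ (m + 1) ∈ Ideal.span {u, v} ^ (m + 1) :=
    Ideal.pow_mem_pow (Ideal.subset_span (by simp)) _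
  apply le_antisymm
  · induction m with
    | zero =>
      rw [pow_one, pow_zero, mul_one, pow_one, span_pair_eq_sup]
    | succ m ih =>
      have ih' := ih (Ideal.pow_mem_pow (Ideal.subset_span (by simp)) _)
      have h2 : Ideal.span {v ^ (m + 1)} * Ideal.span {u, v} ≤
          Ideal.span {u} * Ideal.span {u, v} ^ (m + 1) ⊔ Ideal.span {v ^ (m + 2)} := by
        calc Ideal.span {v ^ (m + 1)} * Ideal.span {u, v}
            = Ideal.span {v ^ (m + 1)} * (Ideal.span {u} ⊔ Ideal.span {v}) := by
              rw [span_pair_eq_sup]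
          _ = Ideal.span {v ^ (m + 1)} * Ideal.span {u} ⊔
                Ideal.span {v ^ (m + 1)} * Ideal.span {v} := by rw [Ideal.mul_sup]
          _ ≤ _ := by
              apply sup_le
              · rw [Ideal.span_singleton_mul_span_singleton, mul_comm,
                  ← Ideal.span_singleton_mul_span_singleton]
                exact le_sup_of_le_left (Ideal.mul_mono_right
                  ((Ideal.span_singleton_le_iff_mem _).mpr
                    (Ideal.pow_mem_pow (Ideal.subset_span (by simp)) _)))
              · rw [Ideal.span_singleton_mul_span_singleton, ← pow_succ]
                exact le_sup_right
      calc Ideal.span {u, v} ^ (m + 2) = Ideal.span {u, v} ^ (m + 1) * Ideal.span {u, v} := by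
            rw [← pow_succ]
        _ ≤ (Ideal.span {u} * Ideal.span {u, v} ^ m ⊔ Ideal.span {v ^ (m + 1)}) *
              Ideal.span {u, v} := Ideal.mul_mono_left ih'
        _ = Ideal.span {u} * Ideal.span {u, v} ^ (m + 1) ⊔
              Ideal.span {v ^ (m + 1)} * Ideal.span {u, v} := by
            rw [Ideal.sup_mul, mul_assoc, ← pow_succ]
        _ ≤ _ := sup_le le_sup_left h2
  · apply sup_le
    · exact le_trans (Ideal.mul_mono_left hu) (by rw [← pow_succ'])
    · exact (Ideal.span_singleton_le_iff_mem _).mpr hv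
end BPart

section CPart
open MvPolynomial
variable {K : Type*} [Field K]

lemma finSuccEquiv_C (K : Type*) [CommRing K] (n : ℕ) (c : K) :
    finSuccEquiv K n (MvPolynomial.C c) = Polynomial.C (MvPolynomial.C c) := by
  simp [finSuccEquiv_apply]

noncomputable def e2 (K : Type*) [Field K] :
    MvPolynomial (Fin 2) K ≃+* Polynomial (MvPolynomial (Fin 1) K) :=
  ((renameEquiv K (Equiv.swap (0 : Fin 2) 1)).trans (finSuccEquiv K 1)).toRingEquiv

lemma e2_lin (c : K) :
    e2 K (X 1 - MvPolynomial.C c * X 0) =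
      Polynomial.X - Polynomial.C (MvPolynomial.C c * X 0) := by
  have h1 : (1 : Fin 2) = Fin.succ 0 := rfl
  show ((renameEquiv K (Equiv.swap (0 : Fin 2) 1)).trans (finSuccEquiv K 1))
      (X 1 - MvPolynomial.C c * X 0) = _
  rw [AlgEquiv.trans_apply, renameEquiv_apply, map_sub, map_mul, rename_X, rename_X, rename_C,
    Equiv.swap_apply_right, Equiv.swap_apply_left, map_sub, map_mul, finSuccEquiv_X_zero, h1,
    finSuccEquiv_X_succ, finSuccEquiv_C, ← Polynomial.C_mul]

lemma prime_lin (c : K) : Prime (X 1 - MvPolynomial.C c * X 0 : MvPolynomial (Fin 2) K) := by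
  rw [← MulEquiv.prime_iff (e2 K).toMulEquiv]
  rw [show (e2 K).toMulEquiv (X 1 - MvPolynomial.C c * X 0) =
    e2 K (X 1 - MvPolynomial.C c * X 0) from rfl, e2_lin]
  exact Polynomial.prime_X_sub_C _

lemma not_dvd_lin {c d : K} (h : c ≠ d) :
    ¬ (X 1 - MvPolynomial.C c * X 0 : MvPolynomial (Fin 2) K) ∣
      (X 1 - MvPolynomial.C d * X 0) := by
  intro ⟨q, hq⟩
  have := congrArg (MvPolynomial.eval (fun i : Fin 2 => if i = 0 then 1 else c)) hq
  simp [MvPolynomial.eval_X, MvPolynomial.eval_C] at this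
  exact h (sub_eq_zero.mp this)

lemma not_dvd_X0 (c : K) :
    ¬ (X 1 - MvPolynomial.C c * X 0 : MvPolynomial (Fin 2) K) ∣ X 0 := by
  intro ⟨q, hq⟩
  have := congrArg (MvPolynomial.eval (fun i : Fin 2 => if i = 0 then 1 else c)) hq
  simp [MvPolynomial.eval_X, MvPolynomial.eval_C] at this

lemma prod_pow_dvd_aux {A : Type*} [CommMonoidWithZero A] [IsCancelMulZero A] {ι : Type*} (f : ι → A) (k : ℕ) :
    ∀ (s : Finset ι), (∀ i ∈ s, Prime (f i)) → (∀ i ∈ s, ∀ j ∈ s, i ≠ j → ¬ f i ∣ f j) →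
    ∀ q : A, (∀ i ∈ s, f i ^ k ∣ q) → (∏ i ∈ s, f i ^ k) ∣ q := by
  classical
  intro s
  induction s using Finset.induction with
  | empty => intro _ _ q _; simp
  | @insert i s hi ih =>
    intro hp hnd q hd
    obtain ⟨q', hq'⟩ := hd i (Finset.mem_insert_self i s)
    rw [Finset.prod_insert hi, hq']
    apply mul_dvd_mul_left
    apply ih (fun j hj => hp j (Finset.mem_insert_of_mem hj))
      (fun j hj l hl hne =>
        hnd j (Finset.mem_insert_of_mem hj) l (Finset.mem_insert_of_mem hl) hne)
    intro j hj
    have hji : j ≠ i := fun h => hi (h ▸ hj)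
    have hdvd : f j ^ k ∣ f i ^ k * q' := hq' ▸ hd j (Finset.mem_insert_of_mem hj)
    exact (hp j (Finset.mem_insert_of_mem hj)).pow_dvd_of_dvd_mul_left _
      (fun hcon => hnd j (Finset.mem_insert_of_mem hj) i (Finset.mem_insert_self i s) hji
        ((hp j (Finset.mem_insert_of_mem hj)).dvd_of_dvd_pow hcon)) hdvd

lemma prod_pow_dvd {A : Type*} [CommMonoidWithZero A] [IsCancelMulZero A] {ι : Type*} {s : Finset ι}
    {f : ι → A} (hp : ∀ i ∈ s, Prime (f i))
    (hnd : ∀ i ∈ s, ∀ j ∈ s, i ≠ j → ¬ f i ∣ f j) (k : ℕ) {q : A}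
    (hd : ∀ i ∈ s, f i ^ k ∣ q) : (∏ i ∈ s, f i) ^ k ∣ q := by
  rw [← Finset.prod_pow]
  exact prod_pow_dvd_aux f k s hp hnd q hd
end CPart

section DPart
open MvPolynomial

variable {K : Type*} [Field K]

noncomputable def ex (K : Type*) [Field K] :
    MvPolynomial (Fin 3) K ≃+* Polynomial (MvPolynomial (Fin 2) K) :=
  (finSuccEquiv K 2).toRingEquiv

noncomputable def ey (K : Type*) [Field K] :
    MvPolynomial (Fin 3) K ≃+* Polynomial (MvPolynomial (Fin 2) K) :=
  ((renameEquiv K (Equiv.swap (0 : Fin 3) 1)).trans (finSuccEquiv K 2)).toRingEquiv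

lemma finSuccEquiv_C' (K : Type*) [CommRing K] (n : ℕ) (c : K) :
    finSuccEquiv K n (MvPolynomial.C c) = Polynomial.C (MvPolynomial.C c) := by
  simp [finSuccEquiv_apply]

lemma ex_X0 : ex K (X 0) = Polynomial.X := finSuccEquiv_X_zero
lemma ex_X1 : ex K (X 1) = Polynomial.C (X 0) := by
  rw [show (1 : Fin 3) = Fin.succ 0 from rfl]; exact finSuccEquiv_X_succ
lemma ex_X2 : ex K (X 2) = Polynomial.C (X 1) := by
  rw [show (2 : Fin 3) = Fin.succ 1 from rfl]; exact finSuccEquiv_X_succ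
lemma ex_C (c : K) : ex K (MvPolynomial.C c) = Polynomial.C (MvPolynomial.C c) :=
  finSuccEquiv_C' K 2 c

lemma ey_X1 : ey K (X 1) = Polynomial.X := by
  show (finSuccEquiv K 2) ((renameEquiv K (Equiv.swap (0 : Fin 3) 1)) (X 1)) = _
  rw [renameEquiv_apply, rename_X, Equiv.swap_apply_right]
  exact finSuccEquiv_X_zero
lemma ey_X0 : ey K (X 0) = Polynomial.C (X 0) := by
  show (finSuccEquiv K 2) ((renameEquiv K (Equiv.swap (0 : Fin 3) 1)) (X 0)) = _
  rw [renameEquiv_apply, rename_X, Equiv.swap_apply_left,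
    show (1 : Fin 3) = Fin.succ 0 from rfl]
  exact finSuccEquiv_X_succ
lemma ey_X2 : ey K (X 2) = Polynomial.C (X 1) := by
  show (finSuccEquiv K 2) ((renameEquiv K (Equiv.swap (0 : Fin 3) 1)) (X 2)) = _
  rw [renameEquiv_apply, rename_X, Equiv.swap_apply_of_ne_of_ne (by decide) (by decide),
    show (2 : Fin 3) = Fin.succ 1 from rfl]
  exact finSuccEquiv_X_succ
lemma ey_C (c : K) : ey K (MvPolynomial.C c) = Polynomial.C (MvPolynomial.C c) := by
  show (finSuccEquiv K 2) ((renameEquiv K (Equiv.swap (0 : Fin 3) 1)) (MvPolynomial.C c)) = _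
  rw [renameEquiv_apply, rename_C]
  exact finSuccEquiv_C' K 2 c

lemma ex_lin (c : K) :
    ex K (X 2 - MvPolynomial.C c * X 1) = Polynomial.C (X 1 - MvPolynomial.C c * X 0) := by
  rw [map_sub, map_mul, ex_X2, ex_X1, ex_C, ← Polynomial.C_mul, ← Polynomial.C_sub]

lemma ey_lin (c : K) :
    ey K (X 2 - MvPolynomial.C c * X 0) = Polynomial.C (X 1 - MvPolynomial.C c * X 0) := by
  rw [map_sub, map_mul, ey_X2, ey_X0, ey_C, ← Polynomial.C_mul, ← Polynomial.C_sub]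

variable {n : ℕ}

noncomputable def PA (a : Fin n → K) : MvPolynomial (Fin 3) K :=
  ∏ i : Fin n, (X 2 - MvPolynomial.C (a i) * X 1)
noncomputable def PB (b : Fin n → K) : MvPolynomial (Fin 3) K :=
  ∏ i : Fin n, (X 2 - MvPolynomial.C (b i) * X 0)
noncomputable def pa (a : Fin n → K) : MvPolynomial (Fin 2) K :=
  ∏ i : Fin n, (X 1 - MvPolynomial.C (a i) * X 0)

lemma ex_PA (a : Fin n → K) : ex K (PA a) = Polynomial.C (pa a) := by
  rw [PA, pa, map_prod]
  rw [show Polynomial.C (∏ i : Fin n, (X 1 - MvPolynomial.C (a i) * X 0 : MvPolynomial (Fin 2) K))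
      = ∏ i : Fin n, Polynomial.C (X 1 - MvPolynomial.C (a i) * X 0) from map_prod _ _ _]
  exact Finset.prod_congr rfl fun i _ => ex_lin (a i)

lemma ey_PB (b : Fin n → K) : ey K (PB b) = Polynomial.C (pa b) := by
  rw [PB, pa, map_prod]
  rw [show Polynomial.C (∏ i : Fin n, (X 1 - MvPolynomial.C (b i) * X 0 : MvPolynomial (Fin 2) K))
      = ∏ i : Fin n, Polynomial.C (X 1 - MvPolynomial.C (b i) * X 0) from map_prod _ _ _]
  exact Finset.prod_congr rfl fun i _ => ey_lin (b i)

end DPart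

section EPart
open MvPolynomial

variable {K : Type*} [Field K] {n : ℕ}

lemma pow_mono_ideal {R : Type*} [CommRing R] {I J : Ideal R} (h : I ≤ J) (m : ℕ) :
    I ^ m ≤ J ^ m := by
  induction m with
  | zero => simp
  | succ m ih => rw [pow_succ, pow_succ]; exact Ideal.mul_mono ih h

lemma dvd_pow_card_sub_prod {R : Type*} [CommRing R] (u w : R) {ι : Type*} (g : ι → R)
    (h : ∀ i, u ∣ w - g i) (s : Finset ι) : u ∣ w ^ s.card - ∏ i ∈ s, g i := by
  classical
  induction s using Finset.induction with
  | empty => simp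
  | @insert i s hi ih =>
    rw [Finset.card_insert_of_notMem hi, Finset.prod_insert hi]
    have key : w ^ (s.card + 1) - g i * ∏ j ∈ s, g j
        = w * (w ^ s.card - ∏ j ∈ s, g j) + (∏ j ∈ s, g j) * (w - g i) := by ring
    rw [key]
    exact dvd_add (Dvd.dvd.mul_left ih w) (Dvd.dvd.mul_left (h i) _)

lemma span_pair_congr {R : Type*} [CommRing R] {w u v : R} (h : u - v ∈ Ideal.span {w}) :
    Ideal.span {w, u} = Ideal.span {w, v} := by
  have key : ∀ {p q : R}, p - q ∈ Ideal.span {w} → Ideal.span {w, p} ≤ Ideal.span {w, q} := by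
    intro p q hpq
    rw [Ideal.span_le]
    rintro t ht
    rcases Set.mem_insert_iff.mp ht with rfl | ht'
    · exact Ideal.subset_span (by simp)
    · rw [Set.mem_singleton_iff.mp ht']
      have hpe : p = (p - q) + q := by ring
      rw [hpe]
      exact add_mem (Ideal.span_mono (by simp) hpq) (Ideal.subset_span (by simp))
  exact le_antisymm (key h) (key (by rw [← neg_sub]; exact neg_mem h))

lemma span_pair_neg {R : Type*} [CommRing R] (w v : R) :
    Ideal.span {w, -v} = Ideal.span {w, v} := by
  rw [span_pair_eq_sup, span_pair_eq_sup, Ideal.span_singleton_neg]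

lemma mem_span_x_pow_iff {w : MvPolynomial (Fin 3) K} {p : MvPolynomial (Fin 2) K}
    (hw : ex K w = Polynomial.C p) (g : MvPolynomial (Fin 3) K) (m : ℕ) :
    g ∈ Ideal.span {X 0, w} ^ m ↔ ∀ j < m, p ^ (m - j) ∣ (ex K g).coeff j := by
  rw [mem_span_pair_pow_iff_map (ex K), ex_X0, hw]
  exact mem_span_pair_pow_iff

lemma mem_span_y_pow_iff {w : MvPolynomial (Fin 3) K} {p : MvPolynomial (Fin 2) K}
    (hw : ey K w = Polynomial.C p) (g : MvPolynomial (Fin 3) K) (m : ℕ) :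
    g ∈ Ideal.span {X 1, w} ^ m ↔ ∀ j < m, p ^ (m - j) ∣ (ey K g).coeff j := by
  rw [mem_span_pair_pow_iff_map (ey K), ey_X1, hw]
  exact mem_span_pair_pow_iff

variable (a b : Fin n → K)

lemma span_x_F {F : MvPolynomial (Fin 3) K} (hF : F = X 2 ^ n - PB b - PA a) :
    Ideal.span {X 0, F} = Ideal.span {X 0, PA a} := by
  rw [← span_pair_neg (X 0 : MvPolynomial (Fin 3) K) (PA a)]
  apply span_pair_congr
  rw [Ideal.mem_span_singleton, hF]
  have : X 2 ^ n - PB b - PA a - - PA a = X 2 ^ n - PB b := by ring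
  rw [this, PB]
  simpa using dvd_pow_card_sub_prod (X 0) (X 2) _
    (fun i => ⟨MvPolynomial.C (b i), by ring⟩) (Finset.univ : Finset (Fin n))

lemma span_y_F {F : MvPolynomial (Fin 3) K} (hF : F = X 2 ^ n - PB b - PA a) :
    Ideal.span {X 1, F} = Ideal.span {X 1, PB b} := by
  rw [← span_pair_neg (X 1 : MvPolynomial (Fin 3) K) (PB b)]
  apply span_pair_congr
  rw [Ideal.mem_span_singleton, hF]
  have : X 2 ^ n - PB b - PA a - - PB b = X 2 ^ n - PA a := by ring
  rw [this, PA]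
  simpa using dvd_pow_card_sub_prod (X 1) (X 2) _
    (fun i => ⟨MvPolynomial.C (a i), by ring⟩) (Finset.univ : Finset (Fin n))

lemma iInf_x (ha : Function.Injective a) (m : ℕ) :
    (⨅ i : Fin n, Ideal.span {X 0, X 2 - MvPolynomial.C (a i) * X 1} ^ m)
      = Ideal.span {X 0, PA a} ^ m := by
  ext g
  rw [Submodule.mem_iInf, mem_span_x_pow_iff (ex_PA a) g m]
  constructor
  · intro h j hj
    rw [pa]
    refine prod_pow_dvd (fun i _ => prime_lin (a i))
      (fun i _ i' _ hne => not_dvd_lin (ha.ne hne)) _ (fun i _ => ?_)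
    exact (mem_span_x_pow_iff (ex_lin (a i)) g m).mp (h i) j hj
  · intro h i
    rw [mem_span_x_pow_iff (ex_lin (a i)) g m]
    intro j hj
    refine dvd_trans (pow_dvd_pow_of_dvd ?_ _) (h j hj)
    rw [pa]
    exact Finset.dvd_prod_of_mem _ (Finset.mem_univ i)

lemma iInf_y (hb : Function.Injective b) (m : ℕ) :
    (⨅ i : Fin n, Ideal.span {X 1, X 2 - MvPolynomial.C (b i) * X 0} ^ m)
      = Ideal.span {X 1, PB b} ^ m := by
  ext g
  rw [Submodule.mem_iInf, mem_span_y_pow_iff (ey_PB b) g m]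
  constructor
  · intro h j hj
    rw [pa]
    refine prod_pow_dvd (fun i _ => prime_lin (b i))
      (fun i _ i' _ hne => not_dvd_lin (hb.ne hne)) _ (fun i _ => ?_)
    exact (mem_span_y_pow_iff (ey_lin (b i)) g m).mp (h i) j hj
  · intro h i
    rw [mem_span_y_pow_iff (ey_lin (b i)) g m]
    intro j hj
    refine dvd_trans (pow_dvd_pow_of_dvd ?_ _) (h j hj)
    rw [pa]
    exact Finset.dvd_prod_of_mem _ (Finset.mem_univ i)

set_option maxHeartbeats 1000000 in
lemma pa_cancel (ha : Function.Injective a) (k : ℕ) {q : MvPolynomial (Fin 2) K}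
    (h : pa a ^ k ∣ X 0 * q) : pa a ^ k ∣ q := by
  rw [pa] at h ⊢
  refine prod_pow_dvd (fun i _ => prime_lin (a i))
    (fun i _ i' _ hne => not_dvd_lin (ha.ne hne)) _ (fun i _ => ?_)
  refine (prime_lin (a i)).pow_dvd_of_dvd_mul_left k (not_dvd_X0 (a i)) ?_
  exact dvd_trans (pow_dvd_pow_of_dvd (Finset.dvd_prod_of_mem _ (Finset.mem_univ i)) k) h

end EPart

section FPart
open MvPolynomial

variable {K : Type*} [Field K] {n : ℕ} (a b : Fin n → K)

lemma key_inf (ha : Function.Injective a) (hb : Function.Injective b)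
    {F : MvPolynomial (Fin 3) K} (hF : F = X 2 ^ n - PB b - PA a) (m : ℕ) :
    Ideal.span {X 0, PA a} ^ m ⊓ Ideal.span {X 1, PB b} ^ m
      = Ideal.span {X 0 * X 1, F} ^ m := by
  induction m with
  | zero => simp
  | succ m ih =>
    have hFy : F ∈ Ideal.span {X 1, PB b} := by
      rw [← span_y_F a b hF]; exact Ideal.subset_span (by simp)
    have hFx : F ∈ Ideal.span {X 0, PA a} := by
      rw [← span_x_F a b hF]; exact Ideal.subset_span (by simp)
    apply le_antisymm
    · rintro g hg
      obtain ⟨hg1, hg2⟩ := Submodule.mem_inf.mp hg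
      rw [← span_x_F a b hF, rep_lemma] at hg1
      obtain ⟨s, hs, t, ht, hst⟩ := Submodule.mem_sup.mp hg1
      obtain ⟨A, hA, hxA⟩ := Ideal.mem_span_singleton_mul.mp hs
      obtain ⟨c, hc⟩ := Ideal.mem_span_singleton'.mp ht
      have h1 : X 0 * A ∈ Ideal.span {X 1, PB b} ^ (m + 1) := by
        have heq : X 0 * A = g - c * F ^ (m + 1) := by rw [← hst, ← hxA, ← hc]; ring
        rw [heq]
        exact sub_mem hg2 (Ideal.mul_mem_left _ _ (Ideal.pow_mem_pow hFy _))
      have h2 : A ∈ Ideal.span {X 1, PB b} ^ (m + 1) := by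
        rw [mem_span_y_pow_iff (ey_PB b) _ _] at h1 ⊢
        intro j hj
        have hd := h1 j hj
        rw [map_mul, ey_X0, Polynomial.coeff_C_mul] at hd
        exact pa_cancel b hb _ hd
      rw [← span_y_F a b hF, rep_lemma] at h2
      obtain ⟨s', hs', t', ht', hst'⟩ := Submodule.mem_sup.mp h2
      obtain ⟨B, hB, hyB⟩ := Ideal.mem_span_singleton_mul.mp hs'
      obtain ⟨d, hd'⟩ := Ideal.mem_span_singleton'.mp ht'
      have hA2 : A ∈ Ideal.span {X 0, PA a} ^ m := by rw [← span_x_F a b hF]; exact hA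
      have h3 : X 1 * B ∈ Ideal.span {X 0, PA a} ^ m := by
        have heq : X 1 * B = A - d * F ^ (m + 1) := by rw [← hst', ← hyB, ← hd']; ring
        rw [heq]
        refine sub_mem hA2 (Ideal.pow_le_pow_right (by omega)
          (Ideal.mul_mem_left _ _ (Ideal.pow_mem_pow hFx _)))
      have h4 : B ∈ Ideal.span {X 0, PA a} ^ m := by
        rw [mem_span_x_pow_iff (ex_PA a) _ _] at h3 ⊢
        intro j hj
        have hd2 := h3 j hj
        rw [map_mul, ex_X1, Polynomial.coeff_C_mul] at hd2
        exact pa_cancel a ha _ hd2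
      have h5 : B ∈ Ideal.span {X 1, PB b} ^ m := by rw [← span_y_F a b hF]; exact hB
      have hBQ : B ∈ Ideal.span {X 0 * X 1, F} ^ m := by
        rw [← ih]; exact Submodule.mem_inf.mpr ⟨h4, h5⟩
      have hgeq : g = (X 0 * X 1) * B + F * (F ^ m * (X 0 * d + c)) := by
        rw [← hst, ← hxA, ← hc, ← hst', ← hyB, ← hd']; ring
      rw [hgeq, pow_succ']
      refine add_mem (Ideal.mul_mem_mul (Ideal.subset_span (by simp)) hBQ)
        (Ideal.mul_mem_mul (Ideal.subset_span (by simp)) ?_)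
      exact Ideal.mul_mem_right _ _ (Ideal.pow_mem_pow (Ideal.subset_span (by simp)) _)
    · refine le_inf ?_ ?_
      · refine pow_mono_ideal ?_ (m + 1)
        rw [Ideal.span_le]
        rintro t ht
        rcases Set.mem_insert_iff.mp ht with rfl | ht2
        · exact Ideal.mul_mem_right _ _ (Ideal.subset_span (by simp))
        · rw [Set.mem_singleton_iff.mp ht2]; exact hFx
      · refine pow_mono_ideal ?_ (m + 1)
        rw [Ideal.span_le]
        rintro t ht
        rcases Set.mem_insert_iff.mp ht with rfl | ht2
        · rw [mul_comm]
          exact Ideal.mul_mem_right _ _ (Ideal.subset_span (by simp))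
        · rw [Set.mem_singleton_iff.mp ht2]; exact hFy

end FPart

section GPart
open MvPolynomial

variable {K : Type*} [Field K] {n : ℕ} (a b : Fin n → K)

lemma prime_X0 : Prime (X 0 : MvPolynomial (Fin 2) K) := by
  rw [← MulEquiv.prime_iff (finSuccEquiv K 1).toRingEquiv.toMulEquiv]
  rw [show (finSuccEquiv K 1).toRingEquiv.toMulEquiv (X 0 : MvPolynomial (Fin 2) K)
      = finSuccEquiv K 1 (X 0) from rfl, finSuccEquiv_X_zero]
  exact Polynomial.prime_X

lemma not_X0_dvd_pa : ¬ (X 0 : MvPolynomial (Fin 2) K) ∣ pa a := by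
  intro ⟨q, hq⟩
  have h := congrArg (MvPolynomial.eval (fun i : Fin 2 => if i = 0 then 0 else 1)) hq
  simp [pa] at h

lemma exF_coeff0 {F : MvPolynomial (Fin 3) K} (hF : F = X 2 ^ n - PB b - PA a) :
    (ex K F).coeff 0 = - pa a := by
  have h1 : ∀ i : Fin n,
      Polynomial.constantCoeff (ex K (X 2 - MvPolynomial.C (b i) * X 0)) = X 1 := by
    intro i
    show (ex K (X 2 - MvPolynomial.C (b i) * X 0)).coeff 0 = X 1
    rw [map_sub, map_mul, ex_X2, ex_C, ex_X0, Polynomial.coeff_sub,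
      Polynomial.mul_coeff_zero, Polynomial.coeff_C_zero, Polynomial.coeff_X_zero,
      mul_zero, sub_zero]
  have hPB : (ex K (PB b)).coeff 0 = X 1 ^ n := by
    calc (ex K (PB b)).coeff 0 = Polynomial.constantCoeff (ex K (PB b)) := rfl
      _ = ∏ i : Fin n, Polynomial.constantCoeff (ex K (X 2 - MvPolynomial.C (b i) * X 0)) := by
          rw [PB, map_prod, map_prod]
      _ = ∏ _i : Fin n, (X 1 : MvPolynomial (Fin 2) K) := Finset.prod_congr rfl fun i _ => h1 i
      _ = X 1 ^ n := by simp
  rw [hF, map_sub, map_sub, map_pow, ex_X2, ex_PA, Polynomial.coeff_sub, Polynomial.coeff_sub,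
    ← Polynomial.C_pow, Polynomial.coeff_C_zero, Polynomial.coeff_C_zero, hPB]
  ring

lemma partB (ha : Function.Injective a) {F : MvPolynomial (Fin 3) K}
    (hF : F = X 2 ^ n - PB b - PA a) :
    Ideal.span {X 0, X 1} ⊓ Ideal.span {X 0 * X 1, F}
      = Ideal.span {X 0 * X 1, X 0 * F, X 1 * F} := by
  apply le_antisymm
  · rintro g hg
    obtain ⟨hgA, hgQ⟩ := Submodule.mem_inf.mp hg
    obtain ⟨s, t, hst⟩ := Ideal.mem_span_pair.mp hgQ
    have htF : t * F ∈ Ideal.span {X 0, X 1} := by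
      have heq : t * F = g - s * (X 0 * X 1) := by rw [← hst]; ring
      rw [heq]
      refine sub_mem hgA (Ideal.mul_mem_left _ _ ?_)
      exact Ideal.mul_mem_right _ _ (Ideal.subset_span (by simp))
    have ht : t ∈ Ideal.span {X 0, X 1} := by
      rw [← pow_one (Ideal.span ({X 0, X 1} : Set (MvPolynomial (Fin 3) K)))] at htF ⊢
      rw [mem_span_x_pow_iff ex_X1 _ 1] at htF ⊢
      intro j hj
      have hj0 : j = 0 := by omega
      subst hj0
      have hd := htF 0 (by omega)
      rw [map_mul, Polynomial.mul_coeff_zero, exF_coeff0 a b hF] at hd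
      simp only [Nat.sub_zero, pow_one] at hd ⊢
      exact ((prime_X0 (K := K)).dvd_or_dvd hd).resolve_right
        (fun hcon => not_X0_dvd_pa a (dvd_neg.mp hcon))
    obtain ⟨α, β, hab⟩ := Ideal.mem_span_pair.mp ht
    have hgeq : g = s * (X 0 * X 1) + (α * (X 0 * F) + β * (X 1 * F)) := by
      rw [← hst, ← hab]; ring
    rw [hgeq]
    refine add_mem (Ideal.mul_mem_left _ _ (Ideal.subset_span (by simp))) (add_mem
      (Ideal.mul_mem_left _ _ (Ideal.subset_span (by simp)))
      (Ideal.mul_mem_left _ _ (Ideal.subset_span (by simp))))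
  · rw [Ideal.span_le]
    rintro t ht
    simp only [Set.mem_insert_iff, Set.mem_singleton_iff] at ht
    have hxA : (X 0 : MvPolynomial (Fin 3) K) ∈ Ideal.span {X 0, X 1} :=
      Ideal.subset_span (by simp)
    have hyA : (X 1 : MvPolynomial (Fin 3) K) ∈ Ideal.span {X 0, X 1} :=
      Ideal.subset_span (by simp)
    have hFQ : F ∈ Ideal.span {X 0 * X 1, F} := Ideal.subset_span (by simp)
    rcases ht with rfl | rfl | rfl
    · exact Submodule.mem_inf.mpr ⟨Ideal.mul_mem_right _ _ hxA, Ideal.subset_span (by simp)⟩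
    · exact Submodule.mem_inf.mpr ⟨Ideal.mul_mem_right _ _ hxA, Ideal.mul_mem_left _ _ hFQ⟩
    · exact Submodule.mem_inf.mpr ⟨Ideal.mul_mem_right _ _ hyA, Ideal.mul_mem_left _ _ hFQ⟩

end GPart
end NCIaux

open MvPolynomial

theorem stmt_11 {K : Type*} [Field K] (n : ℕ) (hn : 1 ≤ n)
    (a b : Fin n → K) (ha : Function.Injective a) (hb : Function.Injective b)
    (ha0 : ∀ i, a i ≠ 0) (hb0 : ∀ i, b i ≠ 0)
    (F : MvPolynomial (Fin 3) K)
    (hF : F = X 2 ^ n - ∏ i : Fin n, (X 2 - MvPolynomial.C (b i) * X 0)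
        - ∏ i : Fin n, (X 2 - MvPolynomial.C (a i) * X 1))
    (I : Ideal (MvPolynomial (Fin 3) K))
    (hI : I = Ideal.span {X 0, X 1} ⊓
        (⨅ i : Fin n, Ideal.span {X 0, X 2 - MvPolynomial.C (a i) * X 1}) ⊓
        (⨅ i : Fin n, Ideal.span {X 1, X 2 - MvPolynomial.C (b i) * X 0}))
    (Isym : ℕ → Ideal (MvPolynomial (Fin 3) K))
    (hIsym : ∀ m, Isym m = Ideal.span {X 0, X 1} ^ m ⊓
        (⨅ i : Fin n, Ideal.span {X 0, X 2 - MvPolynomial.C (a i) * X 1} ^ m) ⊓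
        (⨅ i : Fin n, Ideal.span {X 1, X 2 - MvPolynomial.C (b i) * X 0} ^ m)) :
    I = Ideal.span {X 0, X 1} ⊓ Ideal.span {X 0 * X 1, F} ∧
      I = Ideal.span {X 0 * X 1, X 0 * F, X 1 * F} ∧
      ∀ m : ℕ, 1 ≤ m →
        Isym m = Ideal.span {X 0, X 1} ^ m ⊓ Ideal.span {X 0 * X 1, F} ^ m := by
  have hF' : F = X 2 ^ n - NCIaux.PB b - NCIaux.PA a := by rw [hF, NCIaux.PB, NCIaux.PA]
  have hCgen : ∀ m : ℕ,
      Isym m = Ideal.span {X 0, X 1} ^ m ⊓ Ideal.span {X 0 * X 1, F} ^ m := by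
    intro m
    rw [hIsym m, NCIaux.iInf_x a ha m, NCIaux.iInf_y b hb m, inf_assoc,
      NCIaux.key_inf a b ha hb hF' m]
  have hA : I = Ideal.span {X 0, X 1} ⊓ Ideal.span {X 0 * X 1, F} := by
    have h1 := NCIaux.iInf_x a ha 1
    have h2 := NCIaux.iInf_y b hb 1
    have h3 := NCIaux.key_inf a b ha hb hF' 1
    simp only [pow_one] at h1 h2 h3
    rw [hI, h1, h2, inf_assoc, h3]
  refine ⟨hA, ?_, fun m _ => hCgen m⟩
  rw [hA]
  exact NCIaux.partB a b ha hF'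
end

section
/- Every monomial x^a y^b z^c with a, b, c ≥ 0 and c ≤ t lies in the K-span of {x^a y^b z^c F^d : a, b, c, d ≥ 0, c < n, dn ≤ t}, where F = z^n − ∏(z − β_i x) − ∏(z − α_i y). -/
open MvPolynomial

private lemma monomial_eq_aux {K : Type*} [CommSemiring K] (m : Fin 3 →₀ ℕ) (c : K) :
    (monomial m c : MvPolynomial (Fin 3) K) = C c * X 0 ^ (m 0) * X 1 ^ (m 1) * X 2 ^ (m 2) := by
  rw [monomial_eq, Finsupp.prod_fintype _ _ (fun i => pow_zero _), Fin.prod_univ_three]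
  ring

private lemma aux_coeff {K : Type*} [Field K] {n : ℕ} (c : Fin n → K) (j : Fin 3)
    (hj : j ≠ 2) (s : Finset (Fin n)) :
    MvPolynomial.coeff (Finsupp.single 2 s.card)
      (∏ i ∈ s, (MvPolynomial.X 2 - MvPolynomial.C (c i) * MvPolynomial.X j :
        MvPolynomial (Fin 3) K)) = 1 := by
  classical
  induction s using Finset.induction with
  | empty => simp
  | insert x s hx ih =>
    rw [Finset.prod_insert hx, Finset.card_insert_of_notMem hx]
    have h1 : Finsupp.single (2 : Fin 3) (s.card + 1)
        = Finsupp.single 2 1 + Finsupp.single 2 s.card := by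
      rw [← Finsupp.single_add, Nat.add_comm]
    rw [sub_mul, coeff_sub, h1, coeff_X_mul, ih, mul_assoc, coeff_C_mul, coeff_X_mul']
    rw [if_neg]
    · ring
    · simp [Finsupp.single_apply, Ne.symm hj]

private lemma aux_support {K : Type*} [Field K] {n : ℕ} (hn : 1 ≤ n) (c : Fin n → K)
    (j : Fin 3) (hj : j ≠ 2) :
    ∀ m ∈ ((∏ i : Fin n, (X 2 - C (c i) * X j)) - X 2 ^ n :
        MvPolynomial (Fin 3) K).support, m 2 < n := by
  classical
  intro m hm
  by_contra hlt
  push_neg at hlt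
  set A : MvPolynomial (Fin 3) K := ∏ i : Fin n, (X 2 - C (c i) * X j) with hA
  have hdeg : A.totalDegree ≤ n := by
    calc A.totalDegree ≤ ∑ i : Fin n, (X 2 - C (c i) * X j :
          MvPolynomial (Fin 3) K).totalDegree := totalDegree_finset_prod _ _
    _ ≤ ∑ _i : Fin n, 1 := by
        refine Finset.sum_le_sum (fun i _ => ?_)
        rw [sub_eq_add_neg]
        refine le_trans (totalDegree_add _ _) (max_le (le_of_eq (totalDegree_X _)) ?_)
        rw [totalDegree_neg]
        refine le_trans (totalDegree_mul _ _) ?_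
        simp [totalDegree_C, totalDegree_X]
    _ = n := by simp
  have hcoeffA : coeff (Finsupp.single 2 n) A = 1 := by
    have := aux_coeff c j hj (Finset.univ : Finset (Fin n))
    simpa using this
  have hne : coeff m (A - X 2 ^ n) ≠ 0 := by
    rwa [MvPolynomial.mem_support_iff] at hm
  rw [coeff_sub, X_pow_eq_monomial, coeff_monomial] at hne
  by_cases hms : Finsupp.single (2 : Fin 3) n = m
  · rw [if_pos hms, ← hms, hcoeffA] at hne
    simp at hne
  · rw [if_neg hms, sub_zero] at hne
    have hmem : m ∈ A.support := MvPolynomial.mem_support_iff.mpr hne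
    have hsum : (m.sum fun _ e => e) ≤ n := le_trans (le_totalDegree hmem) hdeg
    have hsum3 : (m.sum fun _ e => e) = m 0 + m 1 + m 2 := by
      rw [Finsupp.sum_fintype _ _ (fun i => rfl), Fin.sum_univ_three]
    have h0 : m 0 = 0 := by omega
    have h1 : m 1 = 0 := by omega
    have h2 : m 2 = n := by omega
    apply hms
    ext i
    fin_cases i <;> simp [Finsupp.single_apply, h0, h1, h2]

private def Sgen {K : Type*} [Field K] (n : ℕ) (F : MvPolynomial (Fin 3) K) (t : ℕ) :
    Set (MvPolynomial (Fin 3) K) :=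
  {g | ∃ p' q' r' d : ℕ, r' < n ∧ d * n ≤ t ∧ g = X 0 ^ p' * X 1 ^ q' * X 2 ^ r' * F ^ d}

private lemma aux_main {K : Type*} [Field K] (n : ℕ) (hn : 1 ≤ n)
    (a b : Fin n → K) (F : MvPolynomial (Fin 3) K)
    (hF : F = X 2 ^ n - ∏ i : Fin n, (X 2 - MvPolynomial.C (b i) * X 0)
        - ∏ i : Fin n, (X 2 - MvPolynomial.C (a i) * X 1)) :
    ∀ r t p q : ℕ, r ≤ t →
      (X 0 : MvPolynomial (Fin 3) K) ^ p * X 1 ^ q * X 2 ^ r ∈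
        Submodule.span K (Sgen n F t) := by
  intro r
  induction r using Nat.strong_induction_on with
  | _ r IH =>
  intro t p q hrt
  by_cases hr : r < n
  · exact Submodule.subset_span ⟨p, q, r, 0, hr, by simp, by ring⟩
  · push_neg at hr
    obtain ⟨s, rfl⟩ : ∃ s, r = s + n := ⟨r - n, (Nat.sub_add_cancel hr).symm⟩
    have hnt : n ≤ t := le_trans hr hrt
    set A : MvPolynomial (Fin 3) K := ∏ i : Fin n, (X 2 - C (b i) * X 0) with hA
    set B : MvPolynomial (Fin 3) K := ∏ i : Fin n, (X 2 - C (a i) * X 1) with hB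
    have hsplit : (X 0 : MvPolynomial (Fin 3) K) ^ p * X 1 ^ q * X 2 ^ (s + n)
        = -(X 0 ^ p * X 1 ^ q * X 2 ^ s * F)
          - (X 0 ^ p * X 1 ^ q * X 2 ^ s * (A - X 2 ^ n))
          - (X 0 ^ p * X 1 ^ q * X 2 ^ s * (B - X 2 ^ n)) := by
      rw [hF, pow_add]; ring
    have hlow : ∀ h : MvPolynomial (Fin 3) K, (∀ m ∈ h.support, m 2 < n) →
        (X 0 : MvPolynomial (Fin 3) K) ^ p * X 1 ^ q * X 2 ^ s * h ∈
          Submodule.span K (Sgen n F t) := by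
      intro h hh
      rw [h.as_sum, Finset.mul_sum]
      refine Submodule.sum_mem _ (fun m hm => ?_)
      have hc : (X 0 : MvPolynomial (Fin 3) K) ^ p * X 1 ^ q * X 2 ^ s
            * monomial m (coeff m h)
          = coeff m h • (X 0 ^ (p + m 0) * X 1 ^ (q + m 1) * X 2 ^ (s + m 2)) := by
        rw [monomial_eq_aux m (coeff m h), smul_eq_C_mul, pow_add, pow_add, pow_add]
        ring
      rw [hc]
      have hm2 := hh m hm
      exact Submodule.smul_mem _ _ (IH (s + m 2) (by omega) t _ _ (by omega))
    have hmulF : ∀ g ∈ Submodule.span K (Sgen n F (t - n)),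
        g * F ∈ Submodule.span K (Sgen n F t) := by
      intro g hg
      refine Submodule.span_induction ?_ ?_ ?_ ?_ hg
      · rintro x ⟨p', q', r', d, h1, h2, rfl⟩
        refine Submodule.subset_span ⟨p', q', r', d + 1, h1, ?_, by ring⟩
        have h3 : (d + 1) * n = d * n + n := by ring
        omega
      · simp
      · intro x y _ _ hx hy; rw [add_mul]; exact Submodule.add_mem _ hx hy
      · intro k x _ hx; rw [smul_mul_assoc]; exact Submodule.smul_mem _ _ hx
    rw [hsplit]
    refine Submodule.sub_mem _ (Submodule.sub_mem _ (Submodule.neg_mem _ ?_) ?_) ?_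
    · exact hmulF _ (IH s (by omega) (t - n) p q (by omega))
    · exact hlow _ (aux_support hn b 0 (by decide))
    · exact hlow _ (aux_support hn a 1 (by decide))

theorem stmt_12 {K : Type*} [Field K] (n : ℕ) (hn : 1 ≤ n)
    (a b : Fin n → K)
    (F : MvPolynomial (Fin 3) K)
    (hF : F = X 2 ^ n - ∏ i : Fin n, (X 2 - MvPolynomial.C (b i) * X 0)
        - ∏ i : Fin n, (X 2 - MvPolynomial.C (a i) * X 1))
    (t : ℕ) :
    ∀ p q r : ℕ, r ≤ t →
      (X 0 : MvPolynomial (Fin 3) K) ^ p * X 1 ^ q * X 2 ^ r ∈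
        Submodule.span K
          {g : MvPolynomial (Fin 3) K | ∃ p' q' r' d : ℕ, r' < n ∧ d * n ≤ t ∧
            g = X 0 ^ p' * X 1 ^ q' * X 2 ^ r' * F ^ d} := by
  intro p q r hr
  exact aux_main n hn a b F hF r t p q hr
end

section
/- The set A = {x^a y^b z^c F^d : a, b, c, d ≥ 0, c < n} is linearly independent over K and spans K[x,y,z] as a K-vector space, where F = z^n − ∏(z − β_i x) − ∏(z − α_i y). -/
open MvPolynomial

private lemma stmt13_cancel {R : Type*} [CommRing R] [IsDomain R] {h : Polynomial R}
    (hm : h.Monic) :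
    ∀ (N : ℕ) (q : ℕ → Polynomial R), (∀ d, (q d).degree < h.degree) →
      (∑ d ∈ Finset.range N, h ^ d * q d) = 0 → ∀ d < N, q d = 0 := by
  intro N
  induction N with
  | zero => intro q _ _ d hd'; omega
  | succ N ih =>
    intro q hq hsum
    rw [Finset.sum_range_succ'] at hsum
    simp only [pow_zero, one_mul] at hsum
    have hrw : ∀ d ∈ Finset.range N, h ^ (d + 1) * q (d + 1) = h * (h ^ d * q (d+1)) := by
      intro d _; ring
    rw [Finset.sum_congr rfl hrw, ← Finset.mul_sum] at hsum
    have h0 : q 0 = 0 := by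
      refine Polynomial.eq_zero_of_dvd_of_degree_lt
        ⟨-(∑ d ∈ Finset.range N, h ^ d * q (d+1)), ?_⟩ (hq 0)
      rw [mul_neg, eq_comm, neg_eq_iff_add_eq_zero]
      exact hsum
    rw [h0, add_zero] at hsum
    have hz : (∑ d ∈ Finset.range N, h ^ d * q (d+1)) = 0 :=
      (mul_eq_zero.mp hsum).resolve_left hm.ne_zero
    intro d hdN
    rcases Nat.eq_zero_or_pos d with rfl | hdp
    · exact h0
    · obtain ⟨d', rfl⟩ := Nat.exists_eq_add_of_le hdp
      have := ih (fun d => q (d + 1)) (fun d => hq (d+1)) hz d' (by omega)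
      simpa [Nat.add_comm] using this

private lemma stmt13_li {R : Type*} [CommRing R] [IsDomain R] {n : ℕ} {h : Polynomial R}
    (hm : h.Monic) (hdeg : h.natDegree = n) :
    LinearIndependent R (fun p : ℕ × Fin n => h ^ p.1 * Polynomial.X ^ (p.2 : ℕ)) := by
  rw [linearIndependent_iff]
  intro l hl
  set N : ℕ := (l.support.sup Prod.fst) + 1 with hN
  set q : ℕ → Polynomial R :=
    fun d => ∑ c : Fin n, Polynomial.C (l (d, c)) * Polynomial.X ^ (c : ℕ) with hq
  have hsub : l.support ⊆ Finset.range N ×ˢ (Finset.univ : Finset (Fin n)) := by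
    intro p hp
    rw [Finset.mem_product]
    refine ⟨Finset.mem_range.mpr ?_, Finset.mem_univ _⟩
    have := Finset.le_sup (f := Prod.fst) hp
    omega
  have hdq : ∀ d, (q d).degree < h.degree := by
    intro d
    have h2 : (q d).degree < (n : WithBot ℕ) := by
      refine lt_of_le_of_lt (Polynomial.degree_sum_le _ _) ?_
      rw [Finset.sup_lt_iff (by exact_mod_cast WithBot.bot_lt_coe n)]
      intro c _
      rw [← Polynomial.smul_eq_C_mul]
      refine lt_of_le_of_lt (Polynomial.degree_smul_le _ _) ?_
      rw [Polynomial.degree_X_pow]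
      exact_mod_cast c.2
    rwa [Polynomial.degree_eq_natDegree hm.ne_zero, hdeg]
  have hsum : (∑ d ∈ Finset.range N, h ^ d * q d) = 0 := by
    rw [← hl, Finsupp.linearCombination_apply, Finsupp.sum_of_support_subset l hsub _
      (fun i _ => by rw [zero_smul]), Finset.sum_product]
    refine Finset.sum_congr rfl fun d _ => ?_
    rw [hq, Finset.mul_sum]
    refine Finset.sum_congr rfl fun c _ => ?_
    rw [Polynomial.smul_eq_C_mul]; ring
  have hq0 : ∀ d < N, q d = 0 := stmt13_cancel hm N q hdq hsum
  ext ⟨d, c⟩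
  rcases lt_or_ge d N with hdN | hdN
  · have h3 := hq0 d hdN
    have hc : (q d).coeff (c : ℕ) = l (d, c) := by
      rw [hq]
      simp only [Polynomial.finset_sum_coeff, Polynomial.coeff_C_mul, Polynomial.coeff_X_pow]
      rw [Finset.sum_eq_single c]
      · simp
      · intro c' _ hcc'
        rw [if_neg (fun hcc => hcc' (Fin.ext hcc.symm)), mul_zero]
      · simp
    rw [← hc, h3]
    simp
  · have h4 : (d, c) ∉ l.support := fun hmem => by
      have := Finset.mem_range.mp (Finset.mem_product.mp (hsub hmem)).1; omega
    simpa using Finsupp.notMem_support_iff.mp h4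

private lemma stmt13_span {R : Type*} [CommRing R] [Nontrivial R] {n : ℕ} (hn : 0 < n)
    {h : Polynomial R} (hm : h.Monic) (hdeg : h.natDegree = n) :
    ⊤ ≤ Submodule.span R (Set.range fun p : ℕ × Fin n => h ^ p.1 * Polynomial.X ^ (p.2 : ℕ)) := by
  set M := Submodule.span R
    (Set.range fun p : ℕ × Fin n => h ^ p.1 * Polynomial.X ^ (p.2 : ℕ)) with hM
  have hmul : ∀ p ∈ M, h * p ∈ M := by
    intro p hp
    induction hp using Submodule.span_induction with
    | mem x hx =>
      obtain ⟨⟨d, c⟩, rfl⟩ := hx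
      refine Submodule.subset_span ⟨(d + 1, c), ?_⟩
      simp [pow_succ]; ring
    | zero => simpa using M.zero_mem
    | add x y _ _ hx hy => rw [mul_add]; exact M.add_mem hx hy
    | smul r x _ hx => rw [mul_smul_comm]; exact M.smul_mem r hx
  have hlow : ∀ p : Polynomial R, p.degree < (n : WithBot ℕ) → p ∈ M := by
    intro p hp
    have hnd : p.natDegree < n := by
      rcases eq_or_ne p 0 with rfl | h0
      · simpa using hn
      · exact_mod_cast (Polynomial.degree_eq_natDegree h0 ▸ hp : ((p.natDegree : WithBot ℕ) < n))
    rw [p.as_sum_range' n hnd]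
    refine Submodule.sum_mem _ fun i hi => ?_
    rw [← Polynomial.smul_X_eq_monomial]
    refine M.smul_mem _ (Submodule.subset_span ⟨(0, ⟨i, Finset.mem_range.mp hi⟩), ?_⟩)
    simp
  have key : ∀ (N : ℕ) (p : Polynomial R), p.natDegree ≤ N → p ∈ M := by
    intro N
    induction N using Nat.strong_induction_on with
    | _ N ih =>
      intro p hp
      rcases lt_or_ge p.degree h.degree with hlt | hge
      · exact hlow p (by rwa [Polynomial.degree_eq_natDegree hm.ne_zero, hdeg] at hlt)
      · have hpne : p ≠ 0 := by
          intro h0; rw [h0] at hge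
          rw [Polynomial.degree_zero, le_bot_iff, Polynomial.degree_eq_bot] at hge
          exact hm.ne_zero hge
        have hdiv : (p /ₘ h).natDegree = p.natDegree - n := by
          rw [Polynomial.natDegree_divByMonic p hm, hdeg]
        have hple : n ≤ p.natDegree := by
          rw [← hdeg]
          exact Polynomial.natDegree_le_natDegree hge
        have hlt' : (p /ₘ h).natDegree < N := by omega
        have hmem : p /ₘ h ∈ M := ih (p /ₘ h).natDegree hlt' _ le_rfl
        have h5 := Polynomial.modByMonic_add_div p h
        rw [← h5]
        exact M.add_mem (hlow _ (by
          rw [← hdeg, ← Polynomial.degree_eq_natDegree hm.ne_zero]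
          exact Polynomial.degree_modByMonic_lt p hm)) (hmul _ hmem)
  intro p _
  exact key p.natDegree p le_rfl

private noncomputable def stmt13_idx (n : ℕ) :
    {q : ℕ × ℕ × ℕ × ℕ // q.2.2.1 < n} → (Fin 2 →₀ ℕ) × ℕ × Fin n :=
  fun q => (Finsupp.single (0 : Fin 2) q.1.2.1 + Finsupp.single (1 : Fin 2) q.1.1,
    (q.1.2.2.2, ⟨q.1.2.2.1, q.2⟩))

private lemma stmt13_hm0 (A B : ℕ) :
    (Finsupp.single (0 : Fin 2) A + Finsupp.single (1 : Fin 2) B) 0 = A ∧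
    (Finsupp.single (0 : Fin 2) A + Finsupp.single (1 : Fin 2) B) 1 = B := by
  constructor <;> simp [Finsupp.single_apply]

private lemma stmt13_idx_inj (n : ℕ) : Function.Injective (stmt13_idx n) := by
  rintro ⟨⟨p1, p2, p3, p4⟩, hq⟩ ⟨⟨p1', p2', p3', p4'⟩, hq'⟩ hEq
  simp only [stmt13_idx, Prod.mk.injEq] at hEq
  obtain ⟨hm, hd, hc⟩ := hEq
  have e0 := DFunLike.congr_fun hm (0 : Fin 2)
  have e1 := DFunLike.congr_fun hm (1 : Fin 2)
  rw [(stmt13_hm0 p2 p1).1, (stmt13_hm0 p2' p1').1] at e0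
  rw [(stmt13_hm0 p2 p1).2, (stmt13_hm0 p2' p1').2] at e1
  have hc' : p3 = p3' := by
    have := congrArg Fin.val hc
    simpa using this
  subst e0; subst e1; subst hd; subst hc'
  rfl

theorem stmt_13 {K : Type*} [Field K] (n : ℕ) (hn : 1 ≤ n)
    (a b : Fin n → K)
    (F : MvPolynomial (Fin 3) K)
    (hF : F = X 2 ^ n - ∏ i : Fin n, (X 2 - MvPolynomial.C (b i) * X 0)
        - ∏ i : Fin n, (X 2 - MvPolynomial.C (a i) * X 1)) :
    LinearIndependent K
      (fun q : {q : ℕ × ℕ × ℕ × ℕ // q.2.2.1 < n} =>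
        (X 0 : MvPolynomial (Fin 3) K) ^ q.1.1 * X 1 ^ q.1.2.1 *
          X 2 ^ q.1.2.2.1 * F ^ q.1.2.2.2) ∧
    Submodule.span K
        {g : MvPolynomial (Fin 3) K | ∃ p q r d : ℕ, r < n ∧
          g = X 0 ^ p * X 1 ^ q * X 2 ^ r * F ^ d} = ⊤ := by
  classical
  set R := MvPolynomial (Fin 2) K with hR
  let e : MvPolynomial (Fin 3) K ≃ₐ[K] Polynomial R :=
    (renameEquiv K (Equiv.swap (0 : Fin 3) 2)).trans (finSuccEquiv K 2)
  have he0 : e (X 0) = Polynomial.C (X 1) := by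
    show finSuccEquiv K 2 (rename (Equiv.swap (0 : Fin 3) 2) (X 0)) = _
    rw [rename_X, Equiv.swap_apply_left]
    have h2 : (2 : Fin 3) = Fin.succ 1 := rfl
    rw [h2, finSuccEquiv_X_succ]
  have he1 : e (X 1) = Polynomial.C (X 0) := by
    show finSuccEquiv K 2 (rename (Equiv.swap (0 : Fin 3) 2) (X 1)) = _
    rw [rename_X, Equiv.swap_apply_of_ne_of_ne (by decide) (by decide)]
    have h1 : (1 : Fin 3) = Fin.succ 0 := rfl
    rw [h1, finSuccEquiv_X_succ]
  have he2 : e (X 2) = Polynomial.X := by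
    show finSuccEquiv K 2 (rename (Equiv.swap (0 : Fin 3) 2) (X 2)) = _
    rw [rename_X, Equiv.swap_apply_right, finSuccEquiv_X_zero]
  have heC : ∀ k : K, e (MvPolynomial.C k) = Polynomial.C (MvPolynomial.C k) := by
    intro k
    have h1 : (MvPolynomial.C k : MvPolynomial (Fin 3) K) = algebraMap K _ k := rfl
    rw [h1, AlgEquiv.commutes, Polynomial.algebraMap_apply]
    rfl
  set P1 : Polynomial R :=
    ∏ i : Fin n, (Polynomial.X - Polynomial.C (MvPolynomial.C (a i) * X 0)) with hP1
  set P2 : Polynomial R :=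
    ∏ i : Fin n, (Polynomial.X - Polynomial.C (MvPolynomial.C (b i) * X 1)) with hP2
  have hG : e F = Polynomial.X ^ n - P2 - P1 := by
    rw [hF, map_sub, map_sub, map_pow, map_prod, map_prod, he2, hP1, hP2]
    congr 1
    · congr 1
      exact Finset.prod_congr rfl fun i _ => by
        rw [map_sub, map_mul, he2, he0, heC, ← Polynomial.C_mul]
    · exact Finset.prod_congr rfl fun i _ => by
        rw [map_sub, map_mul, he2, he1, heC, ← Polynomial.C_mul]
  set h : Polynomial R := P1 + (P2 - Polynomial.X ^ n) with hh
  have hmP1 : P1.Monic :=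
    Polynomial.monic_prod_of_monic _ _ fun i _ => Polynomial.monic_X_sub_C _
  have hmP2 : P2.Monic :=
    Polynomial.monic_prod_of_monic _ _ fun i _ => Polynomial.monic_X_sub_C _
  have hdP1 : P1.natDegree = n := by
    rw [hP1, Polynomial.natDegree_prod_of_monic _ _ fun i _ => Polynomial.monic_X_sub_C _]
    simp only [Polynomial.natDegree_X_sub_C, Finset.sum_const, Finset.card_univ,
      Fintype.card_fin, smul_eq_mul, mul_one]
  have hdP2 : P2.natDegree = n := by
    rw [hP2, Polynomial.natDegree_prod_of_monic _ _ fun i _ => Polynomial.monic_X_sub_C _]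
    simp only [Polynomial.natDegree_X_sub_C, Finset.sum_const, Finset.card_univ,
      Fintype.card_fin, smul_eq_mul, mul_one]
  have hdeg1 : P1.degree = (n : WithBot ℕ) := by
    rw [Polynomial.degree_eq_natDegree hmP1.ne_zero, hdP1]
  have hdeg2 : P2.degree = (n : WithBot ℕ) := by
    rw [Polynomial.degree_eq_natDegree hmP2.ne_zero, hdP2]
  have hdsub : (P2 - Polynomial.X ^ n).degree < P1.degree := by
    have h1 : (P2 - Polynomial.X ^ n).degree < P2.degree :=
      Polynomial.degree_sub_lt
        (by rw [Polynomial.degree_X_pow, hdeg2])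
        hmP2.ne_zero
        (by rw [hmP2.leadingCoeff, Polynomial.leadingCoeff_X_pow])
    rw [hdeg1, ← hdeg2]
    exact h1
  have hmh : h.Monic := hmP1.add_of_left hdsub
  have hdh : h.natDegree = n := by
    rw [hh]
    exact (Polynomial.natDegree_eq_of_degree_eq
      (Polynomial.degree_add_eq_left_of_degree_lt hdsub)).trans hdP1
  have hsymm : e.symm h = -F := by
    have h1 : h = e (-F) := by rw [map_neg, hG, hh]; ring
    rw [h1, AlgEquiv.symm_apply_apply]
  -- the bases
  let PB : Module.Basis (ℕ × Fin n) R (Polynomial R) :=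
    Module.Basis.mk (stmt13_li hmh hdh) (stmt13_span hn hmh hdh)
  let B : Module.Basis ((Fin 2 →₀ ℕ) × ℕ × Fin n) K (Polynomial R) :=
    (basisMonomials (Fin 2) K).smulTower PB
  let Bm : Module.Basis ((Fin 2 →₀ ℕ) × ℕ × Fin n) K (MvPolynomial (Fin 3) K) :=
    B.map e.symm.toLinearEquiv
  have hs0 : e.symm (Polynomial.C (X 0)) = X 1 := by rw [← he1, AlgEquiv.symm_apply_apply]
  have hs1 : e.symm (Polynomial.C (X 1)) = X 0 := by rw [← he0, AlgEquiv.symm_apply_apply]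
  have hsX : e.symm Polynomial.X = X 2 := by rw [← he2, AlgEquiv.symm_apply_apply]
  have key : ∀ (m : Fin 2 →₀ ℕ) (d : ℕ) (c : Fin n),
      Bm (m, (d, c)) =
        ((-1 : K)) ^ d • (X 0 ^ (m 1) * X 1 ^ (m 0) * X 2 ^ (c : ℕ) * F ^ d) := by
    intro m d c
    have hmdec : m = Finsupp.single (0 : Fin 2) (m 0) + Finsupp.single (1 : Fin 2) (m 1) := by
      ext j; fin_cases j <;> simp [Finsupp.single_apply]
    have hms : (monomial m 1 : R) = X 0 ^ (m 0) * X 1 ^ (m 1) := by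
      rw [X_pow_eq_monomial, X_pow_eq_monomial, monomial_mul, one_mul, ← hmdec]
    have hPB : PB (d, c) = h ^ d * Polynomial.X ^ (c : ℕ) := Module.Basis.mk_apply _ _ _
    have h1 : B (m, (d, c)) =
        Polynomial.C ((X 0 : R)) ^ (m 0) * Polynomial.C ((X 1 : R)) ^ (m 1) *
          (h ^ d * Polynomial.X ^ (c : ℕ)) := by
      show ((basisMonomials (Fin 2) K).smulTower PB) (m, (d, c)) = _
      rw [Module.Basis.smulTower_apply]
      have hb : (basisMonomials (Fin 2) K) m = monomial m 1 := by
        rw [coe_basisMonomials]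
      rw [hb, hPB, Polynomial.smul_eq_C_mul, hms, map_mul, map_pow, map_pow]
    have h2 : Bm (m, (d, c)) = e.symm (B (m, (d, c))) := Module.Basis.map_apply _ _ _
    rw [h2, h1]
    simp only [map_mul, map_pow, hsymm, hsX, hs0, hs1]
    rw [MvPolynomial.smul_eq_C_mul, map_pow, map_neg, MvPolynomial.C_1, neg_pow F]
    ring
  constructor
  · have hbli : LinearIndependent K (fun q => Bm (stmt13_idx n q)) :=
      Bm.linearIndependent.comp (stmt13_idx n) (stmt13_idx_inj n)
    have hgoal : (fun q : {q : ℕ × ℕ × ℕ × ℕ // q.2.2.1 < n} =>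
        (X 0 : MvPolynomial (Fin 3) K) ^ q.1.1 * X 1 ^ q.1.2.1 *
          X 2 ^ q.1.2.2.1 * F ^ q.1.2.2.2)
        = (fun q : {q : ℕ × ℕ × ℕ × ℕ // q.2.2.1 < n} => ((-1 : Kˣ) ^ q.1.2.2.2))
            • (fun q => Bm (stmt13_idx n q)) := by
      funext q
      rw [Pi.smul_apply']
      show _ = ((-1 : Kˣ) ^ q.1.2.2.2) • Bm (stmt13_idx n q)
      rw [show stmt13_idx n q =
        (Finsupp.single (0 : Fin 2) q.1.2.1 + Finsupp.single (1 : Fin 2) q.1.1,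
          (q.1.2.2.2, ⟨q.1.2.2.1, q.2⟩)) from rfl]
      rw [key]
      rw [(stmt13_hm0 q.1.2.1 q.1.1).1, (stmt13_hm0 q.1.2.1 q.1.1).2]
      rw [Units.smul_def, Units.val_pow_eq_pow_val, Units.val_neg, Units.val_one,
        smul_smul, ← mul_pow, neg_mul_neg, one_mul, one_pow, one_smul]
    rw [hgoal]
    exact hbli.units_smul _
  · rw [eq_top_iff, ← Bm.span_eq]
    refine Submodule.span_le.mpr ?_
    rintro g ⟨⟨m, d, c⟩, rfl⟩
    rw [key]
    exact Submodule.smul_mem _ _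
      (Submodule.subset_span ⟨m 1, m 0, c, d, c.2, rfl⟩)
end

section
/- With I the ideal of a nearly-complete intersection, I^(m) equals the K-span of {x^a y^b z^c F^d : a, b, c, d ≥ 0, c < n, a + b ≥ m, min(a,b) + d ≥ m}. -/
open MvPolynomial

namespace NCI

variable {K : Type*} [Field K]

/-- The basic generating sets: powers `x^p y^q z^r F^d` with `r < n` and a side
condition `P p q d`. -/
def Gen (n : ℕ) (F : MvPolynomial (Fin 3) K) (P : ℕ → ℕ → ℕ → Prop) :
    Set (MvPolynomial (Fin 3) K) :=
  {g | ∃ p q r d : ℕ, r < n ∧ P p q d ∧ g = X 0 ^ p * X 1 ^ q * X 2 ^ r * F ^ d}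

/-- Conditions on `P` making `Gen`-spans behave like ideals. -/
structure Good (P : ℕ → ℕ → ℕ → Prop) : Prop where
  mono : ∀ p q d a b, P p q d → P (p + a) (q + b) d
  succ : ∀ p q d, P p q d → P p q (d + 1)

lemma monomial_eq_smul (σ : Fin 3 →₀ ℕ) (c : K) :
    monomial σ c = c • (X 0 ^ σ 0 * X 1 ^ σ 1 * X 2 ^ σ 2 : MvPolynomial (Fin 3) K) := by
  rw [smul_eq_C_mul, monomial_eq]
  congr 1
  rw [Finsupp.prod_pow]
  exact Fin.prod_univ_three _

lemma mul_mem_of_span {α : MvPolynomial (Fin 3) K} {S : Set (MvPolynomial (Fin 3) K)}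
    {T : Submodule K (MvPolynomial (Fin 3) K)} (h : ∀ g ∈ S, α * g ∈ T) :
    ∀ w ∈ Submodule.span K S, α * w ∈ T := by
  intro w hw
  have h1 : α * w ∈ Submodule.map (LinearMap.mulLeft K α) (Submodule.span K S) :=
    ⟨w, hw, rfl⟩
  rw [Submodule.map_span] at h1
  refine Submodule.span_le.mpr ?_ h1
  rintro g ⟨u, hu, rfl⟩
  exact h u hu

section Main

variable (n : ℕ) (F : MvPolynomial (Fin 3) K)

lemma lowz_mem_span (s : MvPolynomial (Fin 3) K) (hs : ∀ σ ∈ s.support, σ 2 < n) :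
    s ∈ Submodule.span K
      {g : MvPolynomial (Fin 3) K | ∃ a b c : ℕ, c < n ∧ g = X 0 ^ a * X 1 ^ b * X 2 ^ c} := by
  rw [s.as_sum]
  refine Submodule.sum_mem _ fun σ hσ => ?_
  rw [monomial_eq_smul]
  exact Submodule.smul_mem _ _ (Submodule.subset_span ⟨σ 0, σ 1, σ 2, hs σ hσ, rfl⟩)

variable (hn : 0 < n) (hsupp : ∀ σ ∈ (F + X 2 ^ n).support, σ 2 < n)

include hn hsupp in
lemma pow_mem_span {P : ℕ → ℕ → ℕ → Prop} (hP : Good P) :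
    ∀ c p q d : ℕ, P p q d →
      X 0 ^ p * X 1 ^ q * X 2 ^ c * F ^ d ∈ Submodule.span K (Gen n F P) := by
  intro c
  induction c using Nat.strong_induction_on with
  | _ c ih =>
    intro p q d h
    by_cases hc : c < n
    · exact Submodule.subset_span ⟨p, q, c, d, hc, h, rfl⟩
    · push_neg at hc
      have h2 : (X 2 : MvPolynomial (Fin 3) K) ^ c = X 2 ^ (c - n) * X 2 ^ n := by
        rw [← pow_add]; congr 1; omega
      have key : X 0 ^ p * X 1 ^ q * X 2 ^ c * F ^ d
          = (X 0 ^ p * X 1 ^ q * X 2 ^ (c - n) * F ^ d) * (F + X 2 ^ n)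
            - X 0 ^ p * X 1 ^ q * X 2 ^ (c - n) * F ^ (d + 1) := by
        rw [h2]; ring
      rw [key]
      refine sub_mem ?_ (ih (c - n) (by omega) p q (d + 1) (hP.succ _ _ _ h))
      refine mul_mem_of_span ?_ _ (lowz_mem_span n _ hsupp)
      rintro g ⟨a, b, e, he, rfl⟩
      have h3 : (X 0 ^ p * X 1 ^ q * X 2 ^ (c - n) * F ^ d) * (X 0 ^ a * X 1 ^ b * X 2 ^ e)
          = X 0 ^ (p + a) * X 1 ^ (q + b) * X 2 ^ (c - n + e) * F ^ d := by
        rw [pow_add, pow_add, pow_add]; ring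
      rw [h3]
      exact ih (c - n + e) (by omega) _ _ _ (hP.mono _ _ _ a b h)

include hn hsupp in
lemma mul_closure {P : ℕ → ℕ → ℕ → Prop} (hP : Good P) (r w : MvPolynomial (Fin 3) K)
    (hw : w ∈ Submodule.span K (Gen n F P)) :
    r * w ∈ Submodule.span K (Gen n F P) := by
  induction r using MvPolynomial.induction_on generalizing w with
  | C a => rw [← smul_eq_C_mul]; exact Submodule.smul_mem _ _ hw
  | add f g hf hg => rw [add_mul]; exact add_mem (hf w hw) (hg w hw)
  | mul_X f i hf =>
    rw [mul_assoc]
    refine hf _ ?_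
    refine mul_mem_of_span ?_ w hw
    rintro g ⟨p, q, r', d, hr, h, rfl⟩
    fin_cases i
    · show (X 0 : MvPolynomial (Fin 3) K) * (X 0 ^ p * X 1 ^ q * X 2 ^ r' * F ^ d) ∈ _
      have h1 : (X 0 : MvPolynomial (Fin 3) K) * (X 0 ^ p * X 1 ^ q * X 2 ^ r' * F ^ d)
          = X 0 ^ (p + 1) * X 1 ^ q * X 2 ^ r' * F ^ d := by rw [pow_succ]; ring
      rw [h1]
      exact pow_mem_span n F hn hsupp hP r' (p + 1) q d (hP.mono p q d 1 0 h)
    · show (X 1 : MvPolynomial (Fin 3) K) * (X 0 ^ p * X 1 ^ q * X 2 ^ r' * F ^ d) ∈ _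
      have h1 : (X 1 : MvPolynomial (Fin 3) K) * (X 0 ^ p * X 1 ^ q * X 2 ^ r' * F ^ d)
          = X 0 ^ p * X 1 ^ (q + 1) * X 2 ^ r' * F ^ d := by rw [pow_succ]; ring
      rw [h1]
      exact pow_mem_span n F hn hsupp hP r' p (q + 1) d (hP.mono p q d 0 1 h)
    · show (X 2 : MvPolynomial (Fin 3) K) * (X 0 ^ p * X 1 ^ q * X 2 ^ r' * F ^ d) ∈ _
      have h1 : (X 2 : MvPolynomial (Fin 3) K) * (X 0 ^ p * X 1 ^ q * X 2 ^ r' * F ^ d)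
          = X 0 ^ p * X 1 ^ q * X 2 ^ (r' + 1) * F ^ d := by rw [pow_succ]; ring
      rw [h1]
      exact pow_mem_span n F hn hsupp hP (r' + 1) p q d h

include hn hsupp in
lemma span_top {P : ℕ → ℕ → ℕ → Prop} (hP : Good P) (hPall : ∀ p q d, P p q d)
    (g : MvPolynomial (Fin 3) K) : g ∈ Submodule.span K (Gen n F P) := by
  rw [g.as_sum]
  refine Submodule.sum_mem _ fun σ hσ => ?_
  rw [monomial_eq_smul]
  refine Submodule.smul_mem _ _ ?_
  have h1 : (X 0 ^ σ 0 * X 1 ^ σ 1 * X 2 ^ σ 2 : MvPolynomial (Fin 3) K)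
      = X 0 ^ σ 0 * X 1 ^ σ 1 * X 2 ^ σ 2 * F ^ 0 := by rw [pow_zero, mul_one]
  rw [h1]
  exact pow_mem_span n F hn hsupp hP (σ 2) (σ 0) (σ 1) 0 (hPall _ _ _)

end Main

/-- generic: a power of a 2-generated ideal is contained in a compatible family of
`K`-submodules. -/
lemma ideal_pow_le {α β : MvPolynomial (Fin 3) K}
    {W : ℕ → Submodule K (MvPolynomial (Fin 3) K)}
    (hW0 : ∀ g, g ∈ W 0)
    (hWmul : ∀ m (r w : MvPolynomial (Fin 3) K), w ∈ W m → r * w ∈ W m)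
    (hα : ∀ m (w : MvPolynomial (Fin 3) K), w ∈ W m → α * w ∈ W (m + 1))
    (hβ : ∀ m (w : MvPolynomial (Fin 3) K), w ∈ W m → β * w ∈ W (m + 1)) (m : ℕ) :
    ((Ideal.span {α, β} ^ m : Ideal (MvPolynomial (Fin 3) K)) : Set (MvPolynomial (Fin 3) K))
      ⊆ (W m : Set (MvPolynomial (Fin 3) K)) := by
  induction m with
  | zero => intro g _; exact hW0 g
  | succ m ih =>
    intro g hg
    rw [pow_succ] at hg
    refine Submodule.mul_induction_on hg (fun a ha b hb => ?_)
      (fun x y hx hy => add_mem hx hy)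
    have ha' : a ∈ W m := ih ha
    induction hb using Submodule.span_induction with
    | mem u hu =>
      rcases hu with rfl | hu
      · rw [mul_comm]; exact hα m a ha'
      · rw [Set.mem_singleton_iff] at hu
        subst hu
        rw [mul_comm]; exact hβ m a ha'
    | zero => rw [mul_zero]; exact zero_mem _
    | add x y hx hy hx' hy' => rw [mul_add]; exact add_mem hx' hy'
    | smul r x hx hx' =>
      have h1 : a * (r • x) = r * (a * x) := by rw [smul_eq_mul]; ring
      rw [h1]
      exact hWmul _ r _ hx'

section Ideals

variable (n : ℕ) (F : MvPolynomial (Fin 3) K)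
variable (hn : 0 < n) (hsupp : ∀ σ ∈ (F + X 2 ^ n).support, σ 2 < n)

lemma good1 (m : ℕ) : Good (fun p q (_ : ℕ) => m ≤ p + q) :=
  ⟨fun p q d a b h => by omega, fun p q d h => h⟩

lemma good2 (m : ℕ) : Good (fun p q (d : ℕ) => m ≤ min p q + d) :=
  ⟨fun p q d a b h => by omega, fun p q d h => by omega⟩

lemma good12 (m : ℕ) : Good (fun p q (d : ℕ) => m ≤ p + q ∧ m ≤ min p q + d) :=
  ⟨fun p q d a b h => by omega, fun p q d h => by omega⟩

include hn hsupp in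
lemma ideal1_le (m : ℕ) :
    ((Ideal.span {X 0, X 1} ^ m : Ideal (MvPolynomial (Fin 3) K)) : Set (MvPolynomial (Fin 3) K))
      ⊆ (Submodule.span K (Gen n F fun p q (_ : ℕ) => m ≤ p + q) :
          Set (MvPolynomial (Fin 3) K)) := by
  refine ideal_pow_le (fun g => span_top n F hn hsupp (good1 0) (fun _ _ _ => Nat.zero_le _) g)
    (fun m r w hw => mul_closure n F hn hsupp (good1 m) r w hw) ?_ ?_ m
  · intro m w hw
    refine mul_mem_of_span ?_ w hw
    rintro g ⟨p, q, r, d, hr, hpq, rfl⟩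
    have h1 : (X 0 : MvPolynomial (Fin 3) K) * (X 0 ^ p * X 1 ^ q * X 2 ^ r * F ^ d)
        = X 0 ^ (p + 1) * X 1 ^ q * X 2 ^ r * F ^ d := by rw [pow_succ]; ring
    rw [h1]
    exact pow_mem_span n F hn hsupp (good1 (m + 1)) r (p + 1) q d (by omega)
  · intro m w hw
    refine mul_mem_of_span ?_ w hw
    rintro g ⟨p, q, r, d, hr, hpq, rfl⟩
    have h1 : (X 1 : MvPolynomial (Fin 3) K) * (X 0 ^ p * X 1 ^ q * X 2 ^ r * F ^ d)
        = X 0 ^ p * X 1 ^ (q + 1) * X 2 ^ r * F ^ d := by rw [pow_succ]; ring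
    rw [h1]
    exact pow_mem_span n F hn hsupp (good1 (m + 1)) r p (q + 1) d (by omega)

include hn hsupp in
lemma ideal2_le (m : ℕ) :
    ((Ideal.span {X 0 * X 1, F} ^ m : Ideal (MvPolynomial (Fin 3) K)) :
        Set (MvPolynomial (Fin 3) K))
      ⊆ (Submodule.span K (Gen n F fun p q (d : ℕ) => m ≤ min p q + d) :
          Set (MvPolynomial (Fin 3) K)) := by
  refine ideal_pow_le (fun g => span_top n F hn hsupp (good2 0) (fun _ _ _ => Nat.zero_le _) g)
    (fun m r w hw => mul_closure n F hn hsupp (good2 m) r w hw) ?_ ?_ m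
  · intro m w hw
    refine mul_mem_of_span ?_ w hw
    rintro g ⟨p, q, r, d, hr, hpq, rfl⟩
    have h1 : (X 0 * X 1 : MvPolynomial (Fin 3) K) * (X 0 ^ p * X 1 ^ q * X 2 ^ r * F ^ d)
        = X 0 ^ (p + 1) * X 1 ^ (q + 1) * X 2 ^ r * F ^ d := by
      rw [pow_succ, pow_succ]; ring
    rw [h1]
    exact pow_mem_span n F hn hsupp (good2 (m + 1)) r (p + 1) (q + 1) d (by omega)
  · intro m w hw
    refine mul_mem_of_span ?_ w hw
    rintro g ⟨p, q, r, d, hr, hpq, rfl⟩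
    have h1 : F * (X 0 ^ p * X 1 ^ q * X 2 ^ r * F ^ d)
        = X 0 ^ p * X 1 ^ q * X 2 ^ r * F ^ (d + 1) := by rw [pow_succ]; ring
    rw [h1]
    exact Submodule.subset_span ⟨p, q, r, d + 1, hr, by omega, rfl⟩

lemma span_le_ideal1 (m : ℕ) :
    ((Submodule.span K (Gen n F fun p q (_ : ℕ) => m ≤ p + q)) :
        Set (MvPolynomial (Fin 3) K))
      ⊆ ((Ideal.span {X 0, X 1} ^ m : Ideal (MvPolynomial (Fin 3) K)) :
          Set (MvPolynomial (Fin 3) K)) := by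
  intro g hg
  have hle : Submodule.span K (Gen n F fun p q (_ : ℕ) => m ≤ p + q)
      ≤ (Ideal.span {X 0, X 1} ^ m : Ideal (MvPolynomial (Fin 3) K)).restrictScalars K := by
    rw [Submodule.span_le]
    rintro g ⟨p, q, r, d, hr, hpq, rfl⟩
    show _ ∈ Ideal.span {X 0, X 1} ^ m
    have hx : (X 0 : MvPolynomial (Fin 3) K) ∈ Ideal.span {X 0, X 1} :=
      Ideal.subset_span (by simp)
    have hy : (X 1 : MvPolynomial (Fin 3) K) ∈ Ideal.span {X 0, X 1} :=
      Ideal.subset_span (by simp)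
    have h1 : (X 0 : MvPolynomial (Fin 3) K) ^ p * X 1 ^ q
        ∈ Ideal.span {X 0, X 1} ^ (p + q) := by
      rw [pow_add]
      exact Ideal.mul_mem_mul (Ideal.pow_mem_pow hx p) (Ideal.pow_mem_pow hy q)
    have h2 : (X 0 : MvPolynomial (Fin 3) K) ^ p * X 1 ^ q ∈ Ideal.span {X 0, X 1} ^ m :=
      Ideal.pow_le_pow_right hpq h1
    have h3 : (X 0 : MvPolynomial (Fin 3) K) ^ p * X 1 ^ q * X 2 ^ r * F ^ d
        = (X 0 ^ p * X 1 ^ q) * (X 2 ^ r * F ^ d) := by ring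
    rw [h3]
    exact Ideal.mul_mem_right _ _ h2
  exact hle hg

lemma span_le_ideal2 (m : ℕ) :
    ((Submodule.span K (Gen n F fun p q (d : ℕ) => m ≤ min p q + d)) :
        Set (MvPolynomial (Fin 3) K))
      ⊆ ((Ideal.span {X 0 * X 1, F} ^ m : Ideal (MvPolynomial (Fin 3) K)) :
          Set (MvPolynomial (Fin 3) K)) := by
  intro g hg
  have hle : Submodule.span K (Gen n F fun p q (d : ℕ) => m ≤ min p q + d)
      ≤ (Ideal.span {X 0 * X 1, F} ^ m : Ideal (MvPolynomial (Fin 3) K)).restrictScalars K := by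
    rw [Submodule.span_le]
    rintro g ⟨p, q, r, d, hr, hpq, rfl⟩
    show _ ∈ Ideal.span {X 0 * X 1, F} ^ m
    have hfac : (X 0 : MvPolynomial (Fin 3) K) ^ p * X 1 ^ q * X 2 ^ r * F ^ d
        = ((X 0 * X 1) ^ min p q * F ^ d) *
            (X 0 ^ (p - min p q) * X 1 ^ (q - min p q) * X 2 ^ r) := by
      have hp : p = min p q + (p - min p q) := by omega
      have hq : q = min p q + (q - min p q) := by omega
      calc (X 0 : MvPolynomial (Fin 3) K) ^ p * X 1 ^ q * X 2 ^ r * F ^ d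
          = X 0 ^ (min p q + (p - min p q)) * X 1 ^ (min p q + (q - min p q)) * X 2 ^ r * F ^ d
            := by rw [← hp, ← hq]
        _ = ((X 0 * X 1) ^ min p q * F ^ d) *
              (X 0 ^ (p - min p q) * X 1 ^ (q - min p q) * X 2 ^ r) := by
            rw [pow_add, pow_add, mul_pow]; ring
    rw [hfac]
    refine Ideal.mul_mem_right _ _ (Ideal.pow_le_pow_right hpq ?_)
    rw [pow_add]
    exact Ideal.mul_mem_mul
      (Ideal.pow_mem_pow (Ideal.subset_span (by simp)) _)
      (Ideal.pow_mem_pow (Ideal.subset_span (by simp)) _)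
  exact hle hg

end Ideals

section Phi

variable (K)

/-- The algebra equivalence separating the variable `X 2`. -/
noncomputable def phi : MvPolynomial (Fin 3) K ≃ₐ[K] Polynomial (MvPolynomial (Fin 2) K) :=
  (renameEquiv K (finRotate 3)).trans (finSuccEquiv K 2)

variable {K}

lemma phi_X0 : phi K (X 0) = Polynomial.C (X 0) := by
  show finSuccEquiv K 2 (rename (finRotate 3) (X 0)) = _
  rw [rename_X]
  have h : (finRotate 3) (0 : Fin 3) = Fin.succ 0 := by decide
  rw [h, finSuccEquiv_X_succ]

lemma phi_X1 : phi K (X 1) = Polynomial.C (X 1) := by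
  show finSuccEquiv K 2 (rename (finRotate 3) (X 1)) = _
  rw [rename_X]
  have h : (finRotate 3) (1 : Fin 3) = Fin.succ 1 := by decide
  rw [h, finSuccEquiv_X_succ]

lemma phi_X2 : phi K (X 2) = Polynomial.X := by
  show finSuccEquiv K 2 (rename (finRotate 3) (X 2)) = _
  rw [rename_X]
  have h : (finRotate 3) (2 : Fin 3) = 0 := by decide
  rw [h, finSuccEquiv_X_zero]

lemma phi_C (k : K) : phi K (C k) = Polynomial.C (C k) := by
  have h1 : (C k : MvPolynomial (Fin 3) K) = algebraMap K _ k := rfl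
  rw [h1, AlgEquiv.commutes]
  rfl

lemma phi_natDegree (u : MvPolynomial (Fin 3) K) :
    (phi K u).natDegree = degreeOf 2 u := by
  show (finSuccEquiv K 2 (rename (finRotate 3) u)).natDegree = _
  rw [natDegree_finSuccEquiv]
  have h0 : (0 : Fin 3) = finRotate 3 2 := by decide
  rw [h0, degreeOf_rename_of_injective (finRotate 3).injective]

end Phi

section Indep

variable {n : ℕ} {F : MvPolynomial (Fin 3) K}

lemma nd_unique {n : ℕ} (hn : 0 < n) {r r' d d' : ℕ} (hr : r < n) (hr' : r' < n)
    (h : n * d + r = n * d' + r') : d = d' ∧ r = r' := by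
  have h1 : (n * d + r) / n = d := by
    rw [Nat.mul_add_div hn, Nat.div_eq_of_lt hr, Nat.add_zero]
  have h2 : (n * d' + r') / n = d' := by
    rw [Nat.mul_add_div hn, Nat.div_eq_of_lt hr', Nat.add_zero]
  have h3 : (n * d + r) % n = r := by
    rw [Nat.mul_add_mod, Nat.mod_eq_of_lt hr]
  have h4 : (n * d' + r') % n = r' := by
    rw [Nat.mul_add_mod, Nat.mod_eq_of_lt hr']
  constructor
  · rw [← h1, ← h2, h]
  · rw [← h3, ← h4, h]

lemma indep (hn : 0 < n) (hsupp : ∀ σ ∈ (F + X 2 ^ n).support, σ 2 < n) :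
    LinearIndependent K (fun t : ℕ × ℕ × Fin n × ℕ =>
      (X 0 ^ t.1 * X 1 ^ t.2.1 * X 2 ^ (t.2.2.1 : ℕ) * F ^ t.2.2.2 :
        MvPolynomial (Fin 3) K)) := by
  classical
  set v : ℕ × ℕ × Fin n × ℕ → MvPolynomial (Fin 3) K := fun t =>
    X 0 ^ t.1 * X 1 ^ t.2.1 * X 2 ^ (t.2.2.1 : ℕ) * F ^ t.2.2.2 with hv
  set key : ℕ × ℕ × Fin n × ℕ → ℕ := fun t => n * t.2.2.2 + (t.2.2.1 : ℕ) with hkey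
  -- degree facts
  have hdeg2 : degreeOf 2 (F + X 2 ^ n) < n := (degreeOf_lt_iff hn).mpr hsupp
  have hφs : (phi K (F + X 2 ^ n)).degree < (n : ℕ) := by
    rcases eq_or_ne (phi K (F + X 2 ^ n)) 0 with h | h
    · rw [h, Polynomial.degree_zero]; exact WithBot.bot_lt_coe n
    · rw [← Polynomial.natDegree_lt_iff_degree_lt h, phi_natDegree]
      exact hdeg2
  set GM : Polynomial (MvPolynomial (Fin 2) K) :=
    Polynomial.X ^ n - phi K (F + X 2 ^ n) with hGM
  have hφF : phi K F = -GM := by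
    rw [hGM]
    have h1 : F = (F + X 2 ^ n) - X 2 ^ n := by ring
    nth_rewrite 1 [h1]
    rw [map_sub, map_pow, phi_X2]
    ring
  have hGMdeg : GM.degree = (n : ℕ) := by
    rw [hGM]
    rw [Polynomial.degree_sub_eq_left_of_degree_lt, Polynomial.degree_X_pow]
    rw [Polynomial.degree_X_pow]
    exact hφs
  have hGMn : GM.natDegree = n := Polynomial.natDegree_eq_of_degree_eq_some hGMdeg
  have hGMmonic : GM.Monic := by
    rw [Polynomial.Monic, Polynomial.leadingCoeff, hGMn, hGM, Polynomial.coeff_sub,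
      Polynomial.coeff_X_pow, if_pos rfl, Polynomial.coeff_eq_zero_of_degree_lt hφs, sub_zero]
  -- the image of a generator under phi
  have hφv : ∀ t : ℕ × ℕ × Fin n × ℕ,
      phi K (v t) = Polynomial.C
          ((-1 : MvPolynomial (Fin 2) K) ^ t.2.2.2 * (X 0 ^ t.1 * X 1 ^ t.2.1)) *
        (Polynomial.X ^ (t.2.2.1 : ℕ) * GM ^ t.2.2.2) := by
    rintro ⟨p, q, r, d⟩
    show phi K (X 0 ^ p * X 1 ^ q * X 2 ^ (r : ℕ) * F ^ d) = _
    rw [map_mul, map_mul, map_mul, map_pow, map_pow, map_pow, map_pow,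
      phi_X0, phi_X1, phi_X2, hφF, neg_pow GM]
    simp only [map_mul, map_pow, map_neg, map_one]
    ring
  -- top coefficient of a generator
  have hcoeff_eq : ∀ t : ℕ × ℕ × Fin n × ℕ,
      (phi K (v t)).coeff (key t)
        = monomial (Finsupp.single 0 t.1 + Finsupp.single 1 t.2.1) ((-1 : K) ^ t.2.2.2) := by
    rintro ⟨p, q, r, d⟩
    rw [hφv ⟨p, q, r, d⟩]
    show (Polynomial.C ((-1 : MvPolynomial (Fin 2) K) ^ d * (X 0 ^ p * X 1 ^ q)) *
        (Polynomial.X ^ (r : ℕ) * GM ^ d)).coeff (n * d + (r : ℕ)) = _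
    rw [Polynomial.coeff_C_mul, Polynomial.coeff_X_pow_mul]
    have h1 : (GM ^ d).coeff (n * d) = 1 := by
      have h2 : (GM ^ d).natDegree = n * d := by
        rw [hGMmonic.natDegree_pow, hGMn, Nat.mul_comm]
      rw [← h2]
      exact (hGMmonic.pow d).coeff_natDegree
    rw [h1, mul_one]
    have h3 : ((-1 : MvPolynomial (Fin 2) K) ^ d * (X 0 ^ p * X 1 ^ q))
        = monomial (Finsupp.single 0 p + Finsupp.single 1 q) ((-1 : K) ^ d) := by
      rw [X_pow_eq_monomial, X_pow_eq_monomial, monomial_mul, mul_one]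
      have h4 : ((-1 : MvPolynomial (Fin 2) K) ^ d) = C ((-1 : K) ^ d) := by
        rw [map_pow, map_neg, map_one]
      rw [h4, C_mul_monomial, mul_one]
    rw [h3]
  -- vanishing below the top
  have hcoeff_lt : ∀ (t : ℕ × ℕ × Fin n × ℕ) (N : ℕ), key t < N →
      (phi K (v t)).coeff N = 0 := by
    rintro ⟨p, q, r, d⟩ N hN
    apply Polynomial.coeff_eq_zero_of_natDegree_lt
    rw [hφv ⟨p, q, r, d⟩]
    calc (Polynomial.C ((-1 : MvPolynomial (Fin 2) K) ^ d * (X 0 ^ p * X 1 ^ q)) *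
          (Polynomial.X ^ (r : ℕ) * GM ^ d)).natDegree
        ≤ (Polynomial.C ((-1 : MvPolynomial (Fin 2) K) ^ d * (X 0 ^ p * X 1 ^ q))).natDegree
            + (Polynomial.X ^ (r : ℕ) * GM ^ d).natDegree := Polynomial.natDegree_mul_le
      _ ≤ (Polynomial.C ((-1 : MvPolynomial (Fin 2) K) ^ d * (X 0 ^ p * X 1 ^ q))).natDegree
            + ((Polynomial.X ^ (r : ℕ) : Polynomial (MvPolynomial (Fin 2) K)).natDegree
              + (GM ^ d).natDegree) := by
          exact Nat.add_le_add_left Polynomial.natDegree_mul_le _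
      _ ≤ 0 + ((r : ℕ) + n * d) := by
          refine Nat.add_le_add ?_ (Nat.add_le_add ?_ ?_)
          · rw [Polynomial.natDegree_C]
          · rw [Polynomial.natDegree_X_pow]
          · rw [hGMmonic.natDegree_pow, hGMn, Nat.mul_comm]
      _ < N := by
          have : key ⟨p, q, r, d⟩ = n * d + (r : ℕ) := rfl
          omega
  -- the main strong induction
  have aux : ∀ (N : ℕ) (S : Finset (ℕ × ℕ × Fin n × ℕ)) (c : ℕ × ℕ × Fin n × ℕ → K),
      (∀ t ∈ S, key t ≤ N) → (∑ t ∈ S, c t • v t) = 0 → ∀ t ∈ S, c t = 0 := by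
    intro N
    induction N using Nat.strong_induction_on with
    | _ N ihN =>
      intro S c hbd hsum t ht
      have layer : ∀ u ∈ S, key u = N → c u = 0 := by
        intro u hu hkeyu
        have h0 : ∑ t ∈ S, c t • phi K (v t) = 0 := by
          have h := congrArg (phi K) hsum
          rw [map_sum, map_zero] at h
          simpa using h
        have h1 : ∑ t ∈ S, c t • (phi K (v t)).coeff N = 0 := by
          have h := congrArg (fun p => Polynomial.coeff p N) h0
          simpa [Polynomial.finset_sum_coeff, Polynomial.coeff_smul] using h
        rw [← Finset.sum_filter_add_sum_filter_not S (fun t => key t = N)] at h1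
        have hz : ∑ t ∈ S.filter (fun t => ¬ key t = N), c t • (phi K (v t)).coeff N = 0 := by
          refine Finset.sum_eq_zero fun t' ht' => ?_
          rw [Finset.mem_filter] at ht'
          rw [hcoeff_lt t' N (lt_of_le_of_ne (hbd t' ht'.1) ht'.2), smul_zero]
        rw [hz, add_zero] at h1
        have h2 := congrArg
          (MvPolynomial.coeff (Finsupp.single 0 u.1 + Finsupp.single 1 u.2.1)) h1
        rw [MvPolynomial.coeff_sum, MvPolynomial.coeff_zero] at h2
        have h3 : ∀ t' ∈ S.filter (fun t => key t = N), t' ≠ u →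
            MvPolynomial.coeff (Finsupp.single 0 u.1 + Finsupp.single 1 u.2.1)
              (c t' • (phi K (v t')).coeff N) = 0 := by
          intro t' ht' hne
          rw [Finset.mem_filter] at ht'
          rw [← ht'.2, hcoeff_eq t', MvPolynomial.coeff_smul, coeff_monomial]
          rw [if_neg, smul_zero]
          intro hEq
          apply hne
          have hpq0 : t'.1 = u.1 := by
            have h6 := DFunLike.congr_fun hEq (0 : Fin 2)
            simpa [Finsupp.single_apply] using h6
          have hpq1 : t'.2.1 = u.2.1 := by
            have h6 := DFunLike.congr_fun hEq (1 : Fin 2)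
            simpa [Finsupp.single_apply] using h6
          have hkey' : key t' = key u := by rw [ht'.2, hkeyu]
          have hrd := nd_unique hn t'.2.2.1.isLt u.2.2.1.isLt hkey'
          obtain ⟨hd, hr⟩ := hrd
          have hr' : t'.2.2.1 = u.2.2.1 := Fin.ext hr
          obtain ⟨p1, q1, r1, d1⟩ := t'
          obtain ⟨p2, q2, r2, d2⟩ := u
          simp only [Prod.mk.injEq]
          simp only at hpq0 hpq1 hr' hd
          exact ⟨hpq0, hpq1, hr', hd⟩
        rw [Finset.sum_eq_single_of_mem u
          (Finset.mem_filter.mpr ⟨hu, hkeyu⟩) h3] at h2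
        rw [← hkeyu, hcoeff_eq u, MvPolynomial.coeff_smul, coeff_monomial,
          if_pos rfl] at h2
        have hne : ((-1 : K) ^ u.2.2.2) ≠ 0 := by
          apply pow_ne_zero; exact neg_ne_zero.mpr one_ne_zero
        have : c u * (-1 : K) ^ u.2.2.2 = 0 := h2
        rcases mul_eq_zero.mp this with h | h
        · exact h
        · exact absurd h hne
      by_cases hkt : key t = N
      · exact layer t ht hkt
      · have hsum' : ∑ t' ∈ S.filter (fun t' => ¬ key t' = N), c t' • v t' = 0 := by
          rw [← Finset.sum_filter_add_sum_filter_not S (fun t => key t = N)] at hsum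
          have hz : ∑ t' ∈ S.filter (fun t' => key t' = N), c t' • v t' = 0 := by
            refine Finset.sum_eq_zero fun t' ht' => ?_
            rw [Finset.mem_filter] at ht'
            rw [layer t' ht'.1 ht'.2, zero_smul]
          rw [hz, zero_add] at hsum
          exact hsum
        have hNpos : 0 < N := by
          have := hbd t ht
          omega
        refine ihN (N - 1) (by omega) _ c (fun t' ht' => ?_) hsum' t
          (Finset.mem_filter.mpr ⟨ht, hkt⟩)
        rw [Finset.mem_filter] at ht'
        have := hbd t' ht'.1
        have := ht'.2
        omega
  rw [linearIndependent_iff']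
  intro S c hsum t ht
  exact aux (S.sup key) S c (fun u hu => Finset.le_sup hu) hsum t ht

end Indep

lemma span_inter {ι M : Type*} [AddCommGroup M] [Module K M] {v : ι → M}
    (hv : LinearIndependent K v) (A B : Set ι) :
    (Submodule.span K (v '' A) ⊓ Submodule.span K (v '' B) : Submodule K M)
      = Submodule.span K (v '' (A ∩ B)) := by
  refine le_antisymm ?_ (le_inf
    (Submodule.span_mono (Set.image_mono (f := v) Set.inter_subset_left))
    (Submodule.span_mono (Set.image_mono (f := v) Set.inter_subset_right)))
  intro g hg
  rw [Submodule.mem_inf] at hg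
  obtain ⟨hgA, hgB⟩ := hg
  have hA : A = (A ∩ B) ∪ (A \ B) := by
    ext t
    by_cases h : t ∈ B <;> simp [h]
  have hsplit : v '' A = v '' (A ∩ B) ∪ v '' (A \ B) := by
    rw [← Set.image_union, ← hA]
  rw [hsplit, Submodule.span_union] at hgA
  obtain ⟨g1, h1, g2, h2, rfl⟩ := Submodule.mem_sup.mp hgA
  have hg2 : g2 ∈ Submodule.span K (v '' B) := by
    have h1B : g1 ∈ Submodule.span K (v '' B) :=
      Submodule.span_mono (Set.image_mono (f := v) Set.inter_subset_right) h1
    have h4 : g2 = g1 + g2 - g1 := by abel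
    rw [h4]
    exact sub_mem hgB h1B
  have hdisj := hv.disjoint_span_image (s := A \ B) (t := B) Set.disjoint_sdiff_left
  have h5 : g2 = 0 := Submodule.disjoint_def.mp hdisj g2 h2 hg2
  rw [h5, add_zero]
  exact h1

lemma gen_eq_image (n : ℕ) (F : MvPolynomial (Fin 3) K) (P : ℕ → ℕ → ℕ → Prop) :
    Gen n F P = (fun t : ℕ × ℕ × Fin n × ℕ =>
        (X 0 ^ t.1 * X 1 ^ t.2.1 * X 2 ^ (t.2.2.1 : ℕ) * F ^ t.2.2.2 :
          MvPolynomial (Fin 3) K)) ''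
      {t : ℕ × ℕ × Fin n × ℕ | P t.1 t.2.1 t.2.2.2} := by
  ext g
  constructor
  · rintro ⟨p, q, r, d, hr, hP, rfl⟩
    exact ⟨(p, q, ⟨r, hr⟩, d), hP, rfl⟩
  · rintro ⟨⟨p, q, r, d⟩, hP, rfl⟩
    exact ⟨p, q, (r : ℕ), d, r.isLt, hP, rfl⟩

/-- The support hypothesis holds for the `F` of the theorem. -/
lemma main_supp (n : ℕ) (hn : 0 < n) (a b : Fin n → K) (F : MvPolynomial (Fin 3) K)
    (hF : F = X 2 ^ n - ∏ i : Fin n, (X 2 - MvPolynomial.C (b i) * X 0)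
        - ∏ i : Fin n, (X 2 - MvPolynomial.C (a i) * X 1)) :
    ∀ σ ∈ (F + X 2 ^ n).support, σ 2 < n := by
  suffices h : degreeOf 2 (F + X 2 ^ n) < n from (degreeOf_lt_iff hn).mp h
  have hgen : ∀ γ : Fin n → MvPolynomial (Fin 2) K,
      Polynomial.degree ((Polynomial.X : Polynomial (MvPolynomial (Fin 2) K)) ^ n
        - ∏ i : Fin n, (Polynomial.X - Polynomial.C (γ i))) < (n : ℕ) := by
    intro γ
    have hm : (∏ i : Fin n, (Polynomial.X - Polynomial.C (γ i))).Monic :=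
      Polynomial.monic_prod_of_monic _ _ fun i _ => Polynomial.monic_X_sub_C _
    have hd : (∏ i : Fin n, (Polynomial.X - Polynomial.C (γ i))).natDegree = n := by
      rw [Polynomial.natDegree_prod_of_monic _ _ fun i _ => Polynomial.monic_X_sub_C _]
      simp
    have h1 : Polynomial.degree ((Polynomial.X : Polynomial (MvPolynomial (Fin 2) K)) ^ n
        - ∏ i : Fin n, (Polynomial.X - Polynomial.C (γ i)))
        < Polynomial.degree ((Polynomial.X : Polynomial (MvPolynomial (Fin 2) K)) ^ n) := by
      apply Polynomial.degree_sub_lt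
      · rw [Polynomial.degree_X_pow, Polynomial.degree_eq_natDegree hm.ne_zero, hd]
      · exact pow_ne_zero _ Polynomial.X_ne_zero
      · rw [Polynomial.leadingCoeff_X_pow, hm.leadingCoeff]
    rwa [Polynomial.degree_X_pow] at h1
  have hφ : phi K (F + X 2 ^ n) =
      ((Polynomial.X : Polynomial (MvPolynomial (Fin 2) K)) ^ n
        - ∏ i : Fin n, (Polynomial.X - Polynomial.C (C (b i) * X 0)))
      + ((Polynomial.X : Polynomial (MvPolynomial (Fin 2) K)) ^ n
        - ∏ i : Fin n, (Polynomial.X - Polynomial.C (C (a i) * X 1))) := by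
    have h1 : F + X 2 ^ n
        = (X 2 ^ n - ∏ i : Fin n, (X 2 - MvPolynomial.C (b i) * X 0))
          + (X 2 ^ n - ∏ i : Fin n, (X 2 - MvPolynomial.C (a i) * X 1)) := by
      rw [hF]; ring
    rw [h1]
    simp only [map_add, map_sub, map_pow, map_prod, map_mul, phi_X0, phi_X1, phi_X2, phi_C]
  have hdeg : (phi K (F + X 2 ^ n)).degree < (n : ℕ) := by
    rw [hφ]
    exact lt_of_le_of_lt (Polynomial.degree_add_le _ _) (max_lt (hgen _) (hgen _))
  rcases eq_or_ne (phi K (F + X 2 ^ n)) 0 with h | h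
  · have h0 : F + X 2 ^ n = 0 := by
      have := congrArg (phi K).symm h
      simpa using this
    rw [h0]
    simpa using hn
  · rw [← phi_natDegree]
    exact (Polynomial.natDegree_lt_iff_degree_lt h).mpr hdeg

end NCI

open MvPolynomial

theorem stmt_14 {K : Type*} [Field K] (n : ℕ) (hn : 1 ≤ n)
    (a b : Fin n → K) (ha : Function.Injective a) (hb : Function.Injective b)
    (ha0 : ∀ i, a i ≠ 0) (hb0 : ∀ i, b i ≠ 0)
    (F : MvPolynomial (Fin 3) K)
    (hF : F = X 2 ^ n - ∏ i : Fin n, (X 2 - MvPolynomial.C (b i) * X 0)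
        - ∏ i : Fin n, (X 2 - MvPolynomial.C (a i) * X 1))
    (Isym : ℕ → Ideal (MvPolynomial (Fin 3) K))
    (hIsym : ∀ m, Isym m =
      Ideal.span {X 0, X 1} ^ m ⊓ Ideal.span {X 0 * X 1, F} ^ m)
    (m : ℕ) (hm : 1 ≤ m) :
    (Isym m : Set (MvPolynomial (Fin 3) K)) =
      ↑(Submodule.span K
        {g : MvPolynomial (Fin 3) K | ∃ p q r d : ℕ, r < n ∧
          p + q ≥ m ∧ min p q + d ≥ m ∧
          g = X 0 ^ p * X 1 ^ q * X 2 ^ r * F ^ d}) := by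
  have hn0 : 0 < n := hn
  have hsupp : ∀ σ ∈ (F + X 2 ^ n).support, σ 2 < n := NCI.main_supp n hn0 a b F hF
  have hRHS : {g : MvPolynomial (Fin 3) K | ∃ p q r d : ℕ, r < n ∧
      p + q ≥ m ∧ min p q + d ≥ m ∧ g = X 0 ^ p * X 1 ^ q * X 2 ^ r * F ^ d}
      = NCI.Gen n F (fun p q d => m ≤ p + q ∧ m ≤ min p q + d) := by
    ext g
    constructor
    · rintro ⟨p, q, r, d, h1, h2, h3, rfl⟩
      exact ⟨p, q, r, d, h1, ⟨h2, h3⟩, rfl⟩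
    · rintro ⟨p, q, r, d, h1, ⟨h2, h3⟩, rfl⟩
      exact ⟨p, q, r, d, h1, h2, h3, rfl⟩
  rw [hIsym m, hRHS]
  have e1 : ((Ideal.span {X 0, X 1} ^ m : Ideal (MvPolynomial (Fin 3) K)) :
      Set (MvPolynomial (Fin 3) K))
      = ↑(Submodule.span K (NCI.Gen n F fun p q (_ : ℕ) => m ≤ p + q)) :=
    Set.Subset.antisymm (NCI.ideal1_le n F hn0 hsupp m) (NCI.span_le_ideal1 n F m)
  have e2 : ((Ideal.span {X 0 * X 1, F} ^ m : Ideal (MvPolynomial (Fin 3) K)) :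
      Set (MvPolynomial (Fin 3) K))
      = ↑(Submodule.span K (NCI.Gen n F fun p q (d : ℕ) => m ≤ min p q + d)) :=
    Set.Subset.antisymm (NCI.ideal2_le n F hn0 hsupp m) (NCI.span_le_ideal2 n F m)
  have hset : ((Ideal.span {X 0, X 1} ^ m ⊓ Ideal.span {X 0 * X 1, F} ^ m :
      Ideal (MvPolynomial (Fin 3) K)) : Set (MvPolynomial (Fin 3) K))
      = ((Ideal.span {X 0, X 1} ^ m : Ideal (MvPolynomial (Fin 3) K)) :
          Set (MvPolynomial (Fin 3) K))
        ∩ ((Ideal.span {X 0 * X 1, F} ^ m : Ideal (MvPolynomial (Fin 3) K)) :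
          Set (MvPolynomial (Fin 3) K)) := rfl
  rw [hset, e1, e2]
  rw [NCI.gen_eq_image n F (fun p q (_ : ℕ) => m ≤ p + q),
    NCI.gen_eq_image n F (fun p q (d : ℕ) => m ≤ min p q + d),
    NCI.gen_eq_image n F (fun p q (d : ℕ) => m ≤ p + q ∧ m ≤ min p q + d)]
  have hint := NCI.span_inter (NCI.indep hn0 hsupp)
    {t : ℕ × ℕ × Fin n × ℕ | m ≤ t.1 + t.2.1}
    {t : ℕ × ℕ × Fin n × ℕ | m ≤ min t.1 t.2.1 + t.2.2.2}
  have hAB : ({t : ℕ × ℕ × Fin n × ℕ | m ≤ t.1 + t.2.1}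
      ∩ {t : ℕ × ℕ × Fin n × ℕ | m ≤ min t.1 t.2.1 + t.2.2.2})
      = {t : ℕ × ℕ × Fin n × ℕ | m ≤ t.1 + t.2.1 ∧ m ≤ min t.1 t.2.1 + t.2.2.2} := rfl
  rw [hAB] at hint
  rw [← hint]
  exact Submodule.coe_inf
end
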